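/- arXiv:1808.09462 — 6 statements merged into one kernel-verified Lean document; each statement's English description precedes it below -/
import Mathlib

section
/- Let p ∈ [1,∞) and let M be a Hermitian s×s complex matrix with positive part M₊ := M + M₋ and negative part M₋ := f₁(M). Then M₊ is positive semidefinite, it is a closest point to M in the positive semidefinite cone with respect to the normalized Schatten p-norm, and d_p(M) = ‖M − M₊‖_p = ‖M₋‖_p = (tr(f_p(M)))^{1/p}. -/
open scoped ComplexOrder

noncomputable section

/-- The negative part function `f_p` for a natural exponent `p`:
`f_p(x) = |x|^p` for `x < 0` and `0` otherwise. -/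
def negPart (p : ℕ) (x : ℝ) : ℝ := if x < 0 then |x| ^ p else 0

/-- The normalized trace of `f(M)` for a Hermitian matrix `M`, defined spectrally:
`tr(f(M)) = s⁻¹ ∑ᵢ f(λᵢ)`. -/
def trFun {s : ℕ} {M : Matrix (Fin s) (Fin s) ℂ} (hM : M.IsHermitian)
    (f : ℝ → ℝ) : ℝ := (s : ℝ)⁻¹ * ∑ i, f (hM.eigenvalues i)

/-- The normalized Schatten p-norm of a Hermitian matrix:
`‖M‖_p = (s⁻¹ ∑ᵢ |λᵢ|^p)^(1/p)`. -/
def schattenNorm {s : ℕ} (p : ℝ) {M : Matrix (Fin s) (Fin s) ℂ}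
    (hM : M.IsHermitian) : ℝ :=
  ((s : ℝ)⁻¹ * ∑ i, |hM.eigenvalues i| ^ p) ^ (1 / p)

/-- The distance of a Hermitian matrix to the psd cone in normalized Schatten p-norm. -/
def distPSD {s : ℕ} (p : ℝ) {M : Matrix (Fin s) (Fin s) ℂ}
    (hM : M.IsHermitian) : ℝ :=
  sInf { r : ℝ | ∃ (N : Matrix (Fin s) (Fin s) ℂ) (hN : N.PosSemidef),
    r = schattenNorm p (hM.sub hN.isHermitian) }

/-- The negative part function for a real exponent `p`. -/
def negPartR (p : ℝ) (x : ℝ) : ℝ := if x < 0 then |x| ^ p else 0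

/-- A real function applied to a Hermitian matrix via its spectral decomposition. -/
def matFun {s : ℕ} {M : Matrix (Fin s) (Fin s) ℂ} (hM : M.IsHermitian)
    (f : ℝ → ℝ) : Matrix (Fin s) (Fin s) ℂ :=
  (hM.eigenvectorUnitary : Matrix (Fin s) (Fin s) ℂ) *
    Matrix.diagonal (fun i => (f (hM.eigenvalues i) : ℂ)) *
    star (hM.eigenvectorUnitary : Matrix (Fin s) (Fin s) ℂ)

section Aux

open Polynomial Finset

lemma negPartR_nonneg (p x : ℝ) : 0 ≤ negPartR p x := by
  unfold negPartR; split
  · exact Real.rpow_nonneg (abs_nonneg x) p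
  · rfl

lemma abs_neg_negPartR_rpow {p : ℝ} (hp : 1 ≤ p) (x : ℝ) :
    |(-(negPartR 1 x))| ^ p = negPartR p x := by
  rw [abs_neg]
  unfold negPartR
  by_cases h : x < 0
  · rw [if_pos h, if_pos h, Real.rpow_one, abs_abs]
  · rw [if_neg h, if_neg h, abs_zero, Real.zero_rpow (by linarith)]

lemma abs_negPartR_rpow {p : ℝ} (hp : 1 ≤ p) (x : ℝ) :
    |negPartR 1 x| ^ p = negPartR p x := by
  rw [← abs_neg]
  exact abs_neg_negPartR_rpow hp x

lemma charpoly_unitary_conj {n : Type*} [Fintype n] [DecidableEq n]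
    (U : Matrix.unitaryGroup n ℂ) (B : Matrix n n ℂ) :
    ((U : Matrix n n ℂ) * B * star (U : Matrix n n ℂ)).charpoly = B.charpoly := by
  set u : Matrix n n ℂ := (U : Matrix n n ℂ)
  have hU1 : u * star u = 1 := U.2.2
  have key : Matrix.charmatrix (u * B * star u)
      = (C : ℂ →+* ℂ[X]).mapMatrix u * Matrix.charmatrix B
        * (C : ℂ →+* ℂ[X]).mapMatrix (star u) := by
    rw [Matrix.charmatrix, Matrix.charmatrix, Matrix.mul_sub, Matrix.sub_mul]
    congr 1
    · rw [← (Matrix.scalar_commute (X : ℂ[X]) (fun r' => mul_comm _ _) _).eq, mul_assoc,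
        ← map_mul, hU1, map_one, mul_one]
    · rw [← map_mul, ← map_mul]
  have hdet : ((C : ℂ →+* ℂ[X]).mapMatrix u).det
      * ((C : ℂ →+* ℂ[X]).mapMatrix (star u)).det = 1 := by
    rw [← Matrix.det_mul, ← map_mul, hU1, map_one, Matrix.det_one]
  rw [Matrix.charpoly, key, Matrix.det_mul, Matrix.det_mul, Matrix.charpoly,
    mul_right_comm, hdet, one_mul]

lemma charpoly_diag {n : Type*} [Fintype n] [DecidableEq n] (v : n → ℂ) :
    (Matrix.diagonal v).charpoly = ∏ i, (X - C (v i)) := by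
  have h : Matrix.charmatrix (Matrix.diagonal v)
      = Matrix.diagonal (fun i => (X : ℂ[X]) - C (v i)) := by
    ext i j
    by_cases h : i = j
    · subst h; simp
    · simp [Matrix.charmatrix_apply_ne _ _ _ h, Matrix.diagonal_apply_ne _ h]
  rw [Matrix.charpoly, h, Matrix.det_diagonal]

lemma sum_g_eig {n : Type*} [Fintype n] [DecidableEq n]
    (U : Matrix.unitaryGroup n ℂ) (d : n → ℝ) {A : Matrix n n ℂ}
    (hrep : A = (U : Matrix n n ℂ) * Matrix.diagonal (fun i => ((d i : ℝ) : ℂ))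
      * star (U : Matrix n n ℂ))
    (hA : A.IsHermitian) (g : ℝ → ℝ) :
    ∑ i, g (hA.eigenvalues i) = ∑ i, g (d i) := by
  have h1 : A.charpoly = ∏ i, (X - C ((d i : ℂ))) := by
    rw [hrep, charpoly_unitary_conj, charpoly_diag]
  have h2 : A.charpoly = ∏ i, (X - C ((hA.eigenvalues i : ℂ))) := by
    conv_lhs => rw [hA.spectral_theorem, Unitary.conjStarAlgAut_apply]
    rw [charpoly_unitary_conj, charpoly_diag]
    rfl
  have hprod : ∀ (e : n → ℝ), (∏ i, (X - C ((e i : ℂ))))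
      = ((Finset.univ.val.map (fun i => ((e i : ℝ) : ℂ))).map (fun z => X - C z)).prod := by
    intro e
    rw [Multiset.map_map]
    rfl
  have h3 : (Finset.univ.val.map (fun i => ((hA.eigenvalues i : ℝ) : ℂ)))
      = Finset.univ.val.map (fun i => ((d i : ℝ) : ℂ)) := by
    have := congrArg Polynomial.roots (h2.symm.trans h1)
    rwa [hprod, hprod, Polynomial.roots_multiset_prod_X_sub_C,
      Polynomial.roots_multiset_prod_X_sub_C] at this
  have hsum : ∀ (e : n → ℝ), ∑ i, g (e i)
      = ((Finset.univ.val.map (fun i => ((e i : ℝ) : ℂ))).map (fun z => g z.re)).sum := by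
    intro e
    rw [Multiset.map_map, Finset.sum_eq_multiset_sum]
    simp [Function.comp]
  rw [hsum, hsum, h3]

lemma herm_rep {n : Type*} [Fintype n] [DecidableEq n]
    (U : Matrix.unitaryGroup n ℂ) (d : n → ℝ) :
    ((U : Matrix n n ℂ) * Matrix.diagonal (fun i => ((d i : ℝ) : ℂ))
      * star (U : Matrix n n ℂ)).IsHermitian := by
  have h : (Matrix.diagonal (fun i => ((d i : ℝ) : ℂ))).IsHermitian := by
    apply Matrix.isHermitian_diagonal_of_self_adjoint
    funext i
    simp [IsSelfAdjoint, Complex.star_def, Complex.conj_ofReal]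
  simpa [Matrix.star_eq_conjTranspose] using
    Matrix.isHermitian_mul_mul_conjTranspose (U : Matrix n n ℂ) h

lemma key_ineq {s : ℕ} {p : ℝ} (hp : 1 ≤ p) {M N : Matrix (Fin s) (Fin s) ℂ}
    (hM : M.IsHermitian) (hN : N.PosSemidef) :
    ∑ i, negPartR p (hM.eigenvalues i)
      ≤ ∑ j, |(hM.sub hN.isHermitian).eigenvalues j| ^ p := by
  have hA : (M - N).IsHermitian := hM.sub hN.isHermitian
  set u : Matrix (Fin s) (Fin s) ℂ := (hM.eigenvectorUnitary : Matrix (Fin s) (Fin s) ℂ) with hu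
  set v : Matrix (Fin s) (Fin s) ℂ := (hA.eigenvectorUnitary : Matrix (Fin s) (Fin s) ℂ) with hv
  set W : Matrix (Fin s) (Fin s) ℂ := star u * v with hW
  set lam := hM.eigenvalues
  set mu := hA.eigenvalues
  set c : Fin s → Fin s → ℝ := fun i j => Complex.normSq (W i j) with hc
  have hc_nonneg : ∀ i j, 0 ≤ c i j := fun i j => Complex.normSq_nonneg _
  have hW1 : W * star W = 1 := by
    rw [hW, star_mul, star_star, mul_assoc, ← mul_assoc v,
      hA.eigenvectorUnitary.2.2, one_mul, hM.eigenvectorUnitary.2.1]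
  have hW2 : star W * W = 1 := by
    rw [hW, star_mul, star_star, mul_assoc, ← mul_assoc u,
      hM.eigenvectorUnitary.2.2, one_mul, hA.eigenvectorUnitary.2.1]
  have hrow : ∀ i, ∑ j, c i j = 1 := by
    intro i
    have h := congrFun (congrFun hW1 i) i
    rw [Matrix.mul_apply] at h
    simp only [Matrix.one_apply_eq] at h
    have : ∑ j, ((c i j : ℝ) : ℂ) = 1 := by
      rw [← h]
      refine Finset.sum_congr rfl fun j _ => ?_
      rw [Matrix.star_apply, Complex.star_def, Complex.mul_conj]
    rw [← Complex.ofReal_sum] at this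
    exact_mod_cast this
  have hcol : ∀ j, ∑ i, c i j = 1 := by
    intro j
    have h := congrFun (congrFun hW2 j) j
    rw [Matrix.mul_apply] at h
    simp only [Matrix.one_apply_eq] at h
    have : ∑ i, ((c i j : ℝ) : ℂ) = 1 := by
      rw [← h]
      refine Finset.sum_congr rfl fun i _ => ?_
      rw [Matrix.star_apply, Complex.star_def, mul_comm, Complex.mul_conj]
    rw [← Complex.ofReal_sum] at this
    exact_mod_cast this
  -- diagonal entries
  set B : Matrix (Fin s) (Fin s) ℂ := star u * N * u with hB
  have hBpsd : B.PosSemidef := by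
    rw [hB]
    simpa [Matrix.star_eq_conjTranspose] using hN.conjTranspose_mul_mul_same u
  have hr_nonneg : ∀ i, 0 ≤ (B i i).re := by
    intro i
    have h := hBpsd.dotProduct_mulVec_nonneg (Pi.single i 1)
    have h2 : B i i = dotProduct (star (Pi.single i 1))
        (Matrix.mulVec B (Pi.single i 1)) := by
      simp only [Matrix.mulVec_single, dotProduct, Pi.star_apply, Pi.single_apply,
        mul_one]
      symm
      rw [Finset.sum_eq_single i]
      · simp
      · intro b _ hb; simp [hb]
      · simp
    rw [← h2] at h
    exact (Complex.le_def.mp h).1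
  have hdiag : ∀ i, lam i - (B i i).re = ∑ j, c i j * mu j := by
    intro i
    have e1 : star u * (M - N) * u
        = Matrix.diagonal (RCLike.ofReal ∘ lam) - B := by
      have hsd := hM.conjStarAlgAut_star_eigenvectorUnitary
      rw [Unitary.conjStarAlgAut_star_apply] at hsd
      rw [Matrix.mul_sub, Matrix.sub_mul, hsd]
    have e2 : star u * (M - N) * u
        = W * Matrix.diagonal ((RCLike.ofReal ∘ mu : Fin s → ℂ)) * star W := by
      conv_lhs => rw [hA.spectral_theorem, Unitary.conjStarAlgAut_apply]
      rw [hW, star_mul, star_star]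
      noncomm_ring
    have e3 := (e1.symm.trans e2)
    have e4 := congrFun (congrFun e3 i) i
    rw [Matrix.sub_apply, Matrix.diagonal_apply_eq] at e4
    have e5 : (W * Matrix.diagonal ((RCLike.ofReal ∘ mu : Fin s → ℂ)) * star W) i i
        = ∑ j, ((c i j * mu j : ℝ) : ℂ) := by
      rw [Matrix.mul_apply]
      refine Finset.sum_congr rfl fun j _ => ?_
      rw [Matrix.mul_diagonal, Matrix.star_apply, Complex.star_def]
      push_cast
      rw [hc]
      rw [← Complex.mul_conj]
      simp only [Function.comp_apply]
      exact mul_right_comm _ _ _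
    rw [e5, ← Complex.ofReal_sum] at e4
    have := congrArg Complex.re e4
    simpa using this
  -- per-index bound
  have hper : ∀ i, negPartR p (lam i) ≤ ∑ j, c i j * |mu j| ^ p := by
    intro i
    by_cases hlt : lam i < 0
    · have h1 : -lam i ≤ ∑ j, c i j * |mu j| := by
        have h2 : ∑ j, c i j * mu j ≤ lam i := by
          rw [← hdiag i]; linarith [hr_nonneg i]
        have h3 : -lam i ≤ ∑ j, c i j * (-mu j) := by
          have hns : ∑ j, c i j * (-mu j) = -(∑ j, c i j * mu j) := by
            simp [mul_neg]
          rw [hns]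
          linarith [h2]
        refine h3.trans (Finset.sum_le_sum fun j _ => ?_)
        exact mul_le_mul_of_nonneg_left (neg_le_abs _) (hc_nonneg i j)
      have h4 : (-lam i) ^ p ≤ (∑ j, c i j * |mu j|) ^ p :=
        Real.rpow_le_rpow (by linarith) h1 (by linarith)
      have h5 : (∑ j, c i j * |mu j|) ^ p ≤ ∑ j, c i j * |mu j| ^ p :=
        Real.rpow_arith_mean_le_arith_mean_rpow Finset.univ (c i) (fun j => |mu j|)
          (fun j _ => hc_nonneg i j) (hrow i) (fun j _ => abs_nonneg _) hp
      have : negPartR p (lam i) = (-lam i) ^ p := by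
        rw [negPartR, if_pos hlt, abs_of_neg hlt]
      linarith
    · have : negPartR p (lam i) = 0 := by rw [negPartR, if_neg hlt]
      rw [this]
      exact Finset.sum_nonneg fun j _ =>
        mul_nonneg (hc_nonneg i j) (Real.rpow_nonneg (abs_nonneg _) p)
  calc ∑ i, negPartR p (lam i) ≤ ∑ i, ∑ j, c i j * |mu j| ^ p :=
        Finset.sum_le_sum fun i _ => hper i
    _ = ∑ j, (∑ i, c i j) * |mu j| ^ p := by
        rw [Finset.sum_comm]
        exact Finset.sum_congr rfl fun j _ => (Finset.sum_mul _ _ _).symm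
    _ = ∑ j, |mu j| ^ p := by
        refine Finset.sum_congr rfl fun j _ => ?_
        rw [hcol j, one_mul]

end Aux

/-- `M₊ = M + M₋` is psd, it is a closest psd matrix to `M` in
normalized Schatten p-norm, and `d_p(M) = ‖M - M₊‖_p = ‖M₋‖_p = tr(f_p(M))^(1/p)`. -/
theorem statement0 (s : ℕ) (p : ℝ) (hp : 1 ≤ p) (M : Matrix (Fin s) (Fin s) ℂ)
    (hM : M.IsHermitian) :
    (M + matFun hM (negPartR 1)).PosSemidef ∧
    ∃ (hneg : (matFun hM (negPartR 1)).IsHermitian)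
      (hsub : (M - (M + matFun hM (negPartR 1))).IsHermitian),
      (∀ (N : Matrix (Fin s) (Fin s) ℂ) (hN : N.PosSemidef),
        schattenNorm p hsub ≤ schattenNorm p (hM.sub hN.isHermitian)) ∧
      distPSD p hM = schattenNorm p hsub ∧
      schattenNorm p hsub = schattenNorm p hneg ∧
      schattenNorm p hneg = trFun hM (negPartR p) ^ (1 / p) := by
  classical
  set lam := hM.eigenvalues with hlam
  set U : Matrix (Fin s) (Fin s) ℂ := (hM.eigenvectorUnitary : Matrix (Fin s) (Fin s) ℂ)
    with hUdef
  have hrepP : matFun hM (negPartR 1)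
      = U * Matrix.diagonal (fun i => ((negPartR 1 (lam i) : ℝ) : ℂ)) * star U := rfl
  have hrepM : M = U * Matrix.diagonal (fun i => ((lam i : ℝ) : ℂ)) * star U :=
    hM.spectral_theorem
  have hrepSum : M + matFun hM (negPartR 1)
      = U * Matrix.diagonal (fun i => ((lam i + negPartR 1 (lam i) : ℝ) : ℂ)) * star U := by
    have hd : Matrix.diagonal (fun i => ((lam i + negPartR 1 (lam i) : ℝ) : ℂ))
        = Matrix.diagonal (fun i => ((lam i : ℝ) : ℂ))
          + Matrix.diagonal (fun i => ((negPartR 1 (lam i) : ℝ) : ℂ)) := by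
      rw [Matrix.diagonal_add]
      funext i
      push_cast
      ring
    rw [hd, Matrix.mul_add, Matrix.add_mul, ← hrepM, ← hrepP]
  have hrepSub : M - (M + matFun hM (negPartR 1))
      = U * Matrix.diagonal (fun i => ((-(negPartR 1 (lam i)) : ℝ) : ℂ)) * star U := by
    have h0 : M - (M + matFun hM (negPartR 1)) = -(matFun hM (negPartR 1)) := by
      abel
    have hd : Matrix.diagonal (fun i => ((-(negPartR 1 (lam i)) : ℝ) : ℂ))
        = -Matrix.diagonal (fun i => ((negPartR 1 (lam i) : ℝ) : ℂ)) := by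
      rw [Matrix.diagonal_neg]
      funext i
      push_cast
      ring
    rw [h0, hrepP, hd, Matrix.mul_neg, Matrix.neg_mul]
  have hpsd : (M + matFun hM (negPartR 1)).PosSemidef := by
    rw [hrepSum]
    have hdiag : (Matrix.diagonal
        (fun i => ((lam i + negPartR 1 (lam i) : ℝ) : ℂ))).PosSemidef := by
      refine Matrix.posSemidef_diagonal_iff.mpr fun i => ?_
      rw [Complex.zero_le_real]
      unfold negPartR
      by_cases h : lam i < 0
      · rw [if_pos h, Real.rpow_one, abs_of_neg h]; linarith
      · rw [if_neg h]; linarith [not_lt.mp h]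
    simpa [Matrix.star_eq_conjTranspose] using
      hdiag.mul_mul_conjTranspose_same U
  have hneg : (matFun hM (negPartR 1)).IsHermitian := by
    rw [hrepP]; exact herm_rep hM.eigenvectorUnitary _
  have hsub : (M - (M + matFun hM (negPartR 1))).IsHermitian := by
    rw [hrepSub]; exact herm_rep hM.eigenvectorUnitary _
  have hsubNorm : schattenNorm p hsub
      = ((s : ℝ)⁻¹ * ∑ i, negPartR p (lam i)) ^ (1 / p) := by
    unfold schattenNorm
    congr 2
    rw [sum_g_eig hM.eigenvectorUnitary _ hrepSub hsub (fun x => |x| ^ p)]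
    exact Finset.sum_congr rfl fun i _ => abs_neg_negPartR_rpow hp _
  have hnegNorm : schattenNorm p hneg
      = ((s : ℝ)⁻¹ * ∑ i, negPartR p (lam i)) ^ (1 / p) := by
    unfold schattenNorm
    congr 2
    rw [sum_g_eig hM.eigenvectorUnitary _ hrepP hneg (fun x => |x| ^ p)]
    exact Finset.sum_congr rfl fun i _ => abs_negPartR_rpow hp _
  have hmin : ∀ (N : Matrix (Fin s) (Fin s) ℂ) (hN : N.PosSemidef),
      schattenNorm p hsub ≤ schattenNorm p (hM.sub hN.isHermitian) := by
    intro N hN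
    rw [hsubNorm]
    unfold schattenNorm
    refine Real.rpow_le_rpow ?_ ?_ (by positivity)
    · refine mul_nonneg (by positivity) (Finset.sum_nonneg fun i _ => negPartR_nonneg _ _)
    · exact mul_le_mul_of_nonneg_left (key_ineq hp hM hN) (by positivity)
  refine ⟨hpsd, hneg, hsub, hmin, ?_, hsubNorm.trans hnegNorm.symm, ?_⟩
  · unfold distPSD
    have hmem : schattenNorm p hsub ∈ { r : ℝ | ∃ (N : Matrix (Fin s) (Fin s) ℂ)
        (hN : N.PosSemidef), r = schattenNorm p (hM.sub hN.isHermitian) } :=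
      ⟨M + matFun hM (negPartR 1), hpsd, rfl⟩
    have hlb : ∀ r ∈ { r : ℝ | ∃ (N : Matrix (Fin s) (Fin s) ℂ)
        (hN : N.PosSemidef), r = schattenNorm p (hM.sub hN.isHermitian) },
        schattenNorm p hsub ≤ r := by
      rintro r ⟨N, hN, rfl⟩
      exact hmin N hN
    exact le_antisymm (csInf_le ⟨schattenNorm p hsub, hlb⟩ hmem)
      (le_csInf ⟨schattenNorm p hsub, hmem⟩ hlb)
  · rw [hnegNorm]
    rfl

end
end

section
/- Let p ≥ 1 be an integer and M a Hermitian s×s complex matrix with ‖M‖_∞ ≤ 1. Then d_p(M)^p = inf{ tr(q(M)) : q ∈ ℝ[x], f_p(x) ≤ q(x) for all x ∈ [−1,1] } and also d_p(M)^p = sup{ tr(q(M)) : q ∈ ℝ[x], q(x) ≤ f_p(x) for all x ∈ [−1,1] }. -/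
open scoped ComplexOrder

noncomputable section

/-! ### Auxiliary lemmas -/

open Matrix

lemma negPart_nonneg' (p : ℕ) (x : ℝ) : 0 ≤ negPart p x := by
  unfold _root_.negPart; split <;> positivity

lemma negPart_le_abs_pow (p : ℕ) (x : ℝ) : negPart p x ≤ |x| ^ p := by
  unfold _root_.negPart; split
  · exact le_rfl
  · positivity

lemma negPart_anti' (p : ℕ) {x y : ℝ} (h : x ≤ y) : negPart p y ≤ negPart p x := by
  unfold _root_.negPart
  split
  · rename_i hy
    rw [if_pos (lt_of_le_of_lt h hy)]
    exact pow_le_pow_left₀ (abs_nonneg y)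
      (by rw [abs_of_neg hy, abs_of_neg (lt_of_le_of_lt h hy)]; linarith) p
  · split
    · positivity
    · exact le_rfl

lemma negPart_eq_min' (p : ℕ) (hp : 1 ≤ p) (x : ℝ) : negPart p x = |min x 0| ^ p := by
  unfold _root_.negPart
  split
  · rename_i hx; rw [min_eq_left hx.le]
  · rename_i hx
    rw [min_eq_right (not_lt.mp hx), abs_zero, zero_pow (by omega)]

lemma continuous_negPart' (p : ℕ) (hp : 1 ≤ p) : Continuous (negPart p) := by
  have : negPart p = fun x => |min x 0| ^ p := funext (negPart_eq_min' p hp)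
  rw [this]
  exact (continuous_abs.comp (continuous_id.min continuous_const)).pow p

lemma convexOn_abs_pow (p : ℕ) : ConvexOn ℝ Set.univ (fun x : ℝ => |x| ^ p) := by
  have habs : ConvexOn ℝ Set.univ (fun x : ℝ => |x|) := by
    exact convexOn_univ_norm (E := ℝ)
  have himg : (fun x : ℝ => |x|) '' Set.univ = Set.Ici 0 := by
    ext y
    constructor
    · rintro ⟨x, -, rfl⟩; exact abs_nonneg x
    · intro hy; exact ⟨y, Set.mem_univ y, abs_of_nonneg hy⟩
  exact ConvexOn.comp (by rw [himg]; exact convexOn_pow p) habs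
    (by rw [himg]; intro a ha b hb hab; exact pow_le_pow_left₀ ha hab p)

lemma dot_sum {s : ℕ} (v : Fin s → ℂ) (f : Fin s → Fin s → ℂ) :
    v ⬝ᵥ (∑ j, f j) = ∑ j, v ⬝ᵥ f j := by
  simp only [dotProduct, Finset.sum_apply, Finset.mul_sum]
  exact Finset.sum_comm

/-- Master Jensen-type trace inequality: if `A` has an orthonormal eigenbasis `u` with real
eigenvalues `e`, then for any orthonormal basis `v` and convex `g`, the sum of `g` applied to
the diagonal values of `A` in the basis `v` is at most `∑ g (e j)`. -/
lemma master {s : ℕ} (A : Matrix (Fin s) (Fin s) ℂ)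
    (u : OrthonormalBasis (Fin s) ℂ (EuclideanSpace ℂ (Fin s))) (e : Fin s → ℝ)
    (hu : ∀ j, A *ᵥ ⇑(u j) = (e j : ℂ) • ⇑(u j))
    (v : OrthonormalBasis (Fin s) ℂ (EuclideanSpace ℂ (Fin s)))
    (g : ℝ → ℝ) (hg : ConvexOn ℝ Set.univ g) :
    ∑ i, g (Complex.re (star (⇑(v i)) ⬝ᵥ (A *ᵥ ⇑(v i)))) ≤ ∑ j, g (e j) := by
  classical
  let c : Fin s → Fin s → ℂ := fun i j => inner (𝕜 := ℂ) (u j) (v i)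
  let w : Fin s → Fin s → ℝ := fun i j => Complex.normSq (c i j)
  have hsvu : ∀ i j, star (⇑(v i)) ⬝ᵥ ⇑(u j) = (starRingEnd ℂ) (c i j) := by
    intro i j
    show star (⇑(v i)) ⬝ᵥ ⇑(u j) = (starRingEnd ℂ) (inner (𝕜 := ℂ) (u j) (v i))
    rw [dotProduct_comm, ← EuclideanSpace.inner_eq_star_dotProduct, ← inner_conj_symm]
  have hvexp : ∀ i, (⇑(v i) : Fin s → ℂ) = ∑ j, c i j • ⇑(u j) := by
    intro i
    have h0 := congrArg (WithLp.linearEquiv 2 ℂ (Fin s → ℂ)) (u.sum_repr (v i)).symm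
    rw [map_sum] at h0
    simpa [u.repr_apply_apply] using h0
  have hdot : ∀ i, Complex.re (star (⇑(v i)) ⬝ᵥ (A *ᵥ ⇑(v i))) = ∑ j, w i j * e j := by
    intro i
    have h1 : A *ᵥ ⇑(v i) = ∑ j, (c i j * e j) • ⇑(u j) := by
      conv_lhs => rw [hvexp i]
      rw [← A.mulVecLin_apply, map_sum]
      refine Finset.sum_congr rfl fun j _ => ?_
      rw [LinearMap.map_smul, A.mulVecLin_apply, hu j, smul_smul]
    rw [h1, dot_sum]
    have h2 : ∀ j, star (⇑(v i)) ⬝ᵥ ((c i j * (e j : ℂ)) • ⇑(u j)) = ((w i j * e j : ℝ) : ℂ) := by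
      intro j
      rw [dotProduct_smul, smul_eq_mul, hsvu i j]
      show c i j * (e j : ℂ) * (starRingEnd ℂ) (c i j) = ((Complex.normSq (c i j) * e j : ℝ) : ℂ)
      rw [mul_right_comm, Complex.mul_conj]
      push_cast
      ring
    rw [Finset.sum_congr rfl fun j _ => h2 j]
    rw [← Complex.ofReal_sum]
    exact Complex.ofReal_re _
  have hnormSq : ∀ i j,
      inner (𝕜 := ℂ) (v i) (u j) * inner (𝕜 := ℂ) (u j) (v i) = ((w i j : ℝ) : ℂ) := by
    intro i j
    show _ = ((Complex.normSq (inner (𝕜 := ℂ) (u j) (v i)) : ℝ) : ℂ)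
    rw [← inner_conj_symm (u j) (v i), Complex.normSq_conj]
    exact Complex.mul_conj _
  have hrow : ∀ i, ∑ j, w i j = 1 := by
    intro i
    have h1 := u.sum_inner_mul_inner (v i) (v i)
    rw [Finset.sum_congr rfl fun j _ => hnormSq i j, inner_self_eq_norm_sq_to_K,
      v.orthonormal.1 i] at h1
    have := congrArg Complex.re h1
    simpa using this
  have hcol : ∀ j, ∑ i, w i j = 1 := by
    intro j
    have h1 := v.sum_inner_mul_inner (u j) (u j)
    have h2 : ∀ i, inner (𝕜 := ℂ) (u j) (v i) * inner (𝕜 := ℂ) (v i) (u j) = ((w i j : ℝ) : ℂ) := by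
      intro i
      rw [mul_comm]; exact hnormSq i j
    rw [Finset.sum_congr rfl fun i _ => h2 i, inner_self_eq_norm_sq_to_K,
      u.orthonormal.1 j] at h1
    have := congrArg Complex.re h1
    simpa using this
  have hjen : ∀ i, g (Complex.re (star (⇑(v i)) ⬝ᵥ (A *ᵥ ⇑(v i)))) ≤ ∑ j, w i j * g (e j) := by
    intro i
    rw [hdot i]
    have := hg.map_sum_le (t := Finset.univ) (w := fun j => w i j) (p := e)
      (fun j _ => Complex.normSq_nonneg _) (hrow i) (fun j _ => Set.mem_univ _)
    simpa [smul_eq_mul] using this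
  calc ∑ i, g (Complex.re (star (⇑(v i)) ⬝ᵥ (A *ᵥ ⇑(v i))))
      ≤ ∑ i, ∑ j, w i j * g (e j) := Finset.sum_le_sum fun i _ => hjen i
    _ = ∑ j, (∑ i, w i j) * g (e j) := by rw [Finset.sum_comm]; simp [Finset.sum_mul]
    _ = ∑ j, g (e j) := by simp [hcol]

lemma mulVec_eig {s : ℕ} {M : Matrix (Fin s) (Fin s) ℂ} (hM : M.IsHermitian) (j : Fin s) :
    M *ᵥ ⇑(hM.eigenvectorBasis j) = ((hM.eigenvalues j : ℂ)) • ⇑(hM.eigenvectorBasis j) := by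
  rw [hM.mulVec_eigenvectorBasis]
  funext k
  simp [Pi.smul_apply, Complex.real_smul]

lemma re_dot_eig {s : ℕ} (A : Matrix (Fin s) (Fin s) ℂ)
    (v : OrthonormalBasis (Fin s) ℂ (EuclideanSpace ℂ (Fin s))) (i : Fin s) (t : ℝ)
    (h : A *ᵥ ⇑(v i) = (t : ℂ) • ⇑(v i)) :
    Complex.re (star (⇑(v i)) ⬝ᵥ (A *ᵥ ⇑(v i))) = t := by
  rw [h, dotProduct_smul, smul_eq_mul]
  have : star (⇑(v i)) ⬝ᵥ ⇑(v i) = 1 := by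
    rw [dotProduct_comm, ← EuclideanSpace.inner_eq_star_dotProduct, inner_self_eq_norm_sq_to_K,
      v.orthonormal.1 i]
    norm_num
  rw [this, mul_one, Complex.ofReal_re]

lemma lower_bound {s : ℕ} (p : ℕ) {M N : Matrix (Fin s) (Fin s) ℂ}
    (hM : M.IsHermitian) (hN : N.PosSemidef) :
    ∑ i, negPart p (hM.eigenvalues i) ≤ ∑ j, |(hM.sub hN.isHermitian).eigenvalues j| ^ p := by
  have hA : (M - N).IsHermitian := hM.sub hN.isHermitian
  have hmaster := master (M - N) hA.eigenvectorBasis hA.eigenvalues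
    (fun j => mulVec_eig hA j) hM.eigenvectorBasis (fun x => |x| ^ p) (convexOn_abs_pow p)
  refine le_trans (Finset.sum_le_sum fun i _ => ?_) hmaster
  have h1 : Complex.re (star (⇑(hM.eigenvectorBasis i)) ⬝ᵥ (M *ᵥ ⇑(hM.eigenvectorBasis i)))
      = hM.eigenvalues i := re_dot_eig M hM.eigenvectorBasis i _ (mulVec_eig hM i)
  have h2 : 0 ≤ Complex.re (star (⇑(hM.eigenvectorBasis i)) ⬝ᵥ
      (N *ᵥ ⇑(hM.eigenvectorBasis i))) := by
    simpa using hN.re_dotProduct_nonneg (⇑(hM.eigenvectorBasis i))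
  have hr : Complex.re (star (⇑(hM.eigenvectorBasis i)) ⬝ᵥ
      ((M - N) *ᵥ ⇑(hM.eigenvectorBasis i))) ≤ hM.eigenvalues i := by
    rw [sub_mulVec, dotProduct_sub, Complex.sub_re, h1]
    linarith
  exact le_trans (negPart_anti' p hr) (negPart_le_abs_pow p _)

lemma exists_good_N {s : ℕ} (p : ℕ) (hp : 1 ≤ p) {M : Matrix (Fin s) (Fin s) ℂ}
    (hM : M.IsHermitian) :
    ∃ (N : Matrix (Fin s) (Fin s) ℂ) (hN : N.PosSemidef),
      ∑ j, |(hM.sub hN.isHermitian).eigenvalues j| ^ p = ∑ i, negPart p (hM.eigenvalues i) := by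
  classical
  set U : Matrix (Fin s) (Fin s) ℂ := (hM.eigenvectorUnitary : Matrix (Fin s) (Fin s) ℂ) with hU
  set d : Fin s → ℝ := fun i => max (hM.eigenvalues i) 0 with hd
  set N : Matrix (Fin s) (Fin s) ℂ := U * diagonal (fun i => (d i : ℂ)) * star U with hNdef
  have hNpsd : N.PosSemidef := by
    have hdiag : (diagonal (fun i => (d i : ℂ))).PosSemidef := by
      refine posSemidef_diagonal_iff.mpr fun i => ?_
      rw [Complex.zero_le_real]
      exact le_max_right _ _
    simpa [hNdef, Matrix.star_eq_conjTranspose] using hdiag.mul_mul_conjTranspose_same U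
  have hA : (M - N).IsHermitian := hM.sub hNpsd.isHermitian
  have heig : ∀ i, (M - N) *ᵥ ⇑(hM.eigenvectorBasis i)
      = ((min (hM.eigenvalues i) 0 : ℝ) : ℂ) • ⇑(hM.eigenvectorBasis i) := by
    intro i
    have hNv : N *ᵥ ⇑(hM.eigenvectorBasis i)
        = ((d i : ℝ) : ℂ) • ⇑(hM.eigenvectorBasis i) := by
      have h1 : star U *ᵥ ⇑(hM.eigenvectorBasis i) = Pi.single i 1 :=
        hM.star_eigenvectorUnitary_mulVec i
      have h2 : diagonal (fun j => (d j : ℂ)) *ᵥ Pi.single i 1 = Pi.single i ((d i : ℂ) * 1) :=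
        diagonal_mulVec_single _ _ _
      have h3 : U *ᵥ Pi.single i ((d i : ℂ)) = (d i : ℂ) • ⇑(hM.eigenvectorBasis i) := by
        funext k
        simp [hU, mulVec_single, mul_comm]
      calc N *ᵥ ⇑(hM.eigenvectorBasis i)
          = U *ᵥ (diagonal (fun j => (d j : ℂ)) *ᵥ (star U *ᵥ ⇑(hM.eigenvectorBasis i))) := by
            rw [mulVec_mulVec, mulVec_mulVec]
        _ = (d i : ℂ) • ⇑(hM.eigenvectorBasis i) := by rw [h1, h2, mul_one, h3]
    have harith : hM.eigenvalues i - d i = min (hM.eigenvalues i) 0 := by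
      rw [hd]
      simp only []
      rcases le_total (hM.eigenvalues i) 0 with h | h
      · simp [max_eq_right h, min_eq_left h]
      · simp [max_eq_left h, min_eq_right h]
    rw [sub_mulVec, mulVec_eig hM i, hNv, ← sub_smul, ← Complex.ofReal_sub, harith]
  have hmaster := master (M - N) hM.eigenvectorBasis (fun i => min (hM.eigenvalues i) 0)
    heig hA.eigenvectorBasis (fun x => |x| ^ p) (convexOn_abs_pow p)
  have hLHS : ∀ j, Complex.re (star (⇑(hA.eigenvectorBasis j)) ⬝ᵥ
      ((M - N) *ᵥ ⇑(hA.eigenvectorBasis j))) = hA.eigenvalues j :=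
    fun j => re_dot_eig (M - N) hA.eigenvectorBasis j _ (mulVec_eig hA j)
  refine ⟨N, hNpsd, le_antisymm ?_ (lower_bound p hM hNpsd)⟩
  calc ∑ j, |(hM.sub hNpsd.isHermitian).eigenvalues j| ^ p
      = ∑ j, (fun x => |x| ^ p) (Complex.re (star (⇑(hA.eigenvectorBasis j)) ⬝ᵥ
          ((M - N) *ᵥ ⇑(hA.eigenvectorBasis j)))) := by
        refine Finset.sum_congr rfl fun j _ => ?_
        rw [hLHS j]
    _ ≤ ∑ i, |min (hM.eigenvalues i) 0| ^ p := hmaster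
    _ = ∑ i, negPart p (hM.eigenvalues i) := by
        refine Finset.sum_congr rfl fun i _ => (negPart_eq_min' p hp _).symm

/-- The distance to the psd cone, raised to the `p`-th power, equals the normalized trace of
`f_p(M)`. -/
lemma distPSD_pow_eq {s : ℕ} (p : ℕ) (hp : 1 ≤ p) {M : Matrix (Fin s) (Fin s) ℂ}
    (hM : M.IsHermitian) :
    distPSD (p : ℝ) hM ^ p = (s : ℝ)⁻¹ * ∑ i, negPart p (hM.eigenvalues i) := by
  set T : ℝ := (s : ℝ)⁻¹ * ∑ i, negPart p (hM.eigenvalues i) with hT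
  have hTnn : 0 ≤ T := by
    apply mul_nonneg (by positivity)
    exact Finset.sum_nonneg fun i _ => negPart_nonneg' p _
  have hpne : ((p : ℝ)) ≠ 0 := Nat.cast_ne_zero.mpr (by omega)
  have hlb : ∀ r ∈ { r : ℝ | ∃ (N : Matrix (Fin s) (Fin s) ℂ) (hN : N.PosSemidef),
      r = schattenNorm (p : ℝ) (hM.sub hN.isHermitian) }, T ^ (1 / (p : ℝ)) ≤ r := by
    rintro r ⟨N, hN, rfl⟩
    unfold schattenNorm
    apply Real.rpow_le_rpow hTnn _ (by positivity)
    simp_rw [Real.rpow_natCast]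
    exact mul_le_mul_of_nonneg_left (lower_bound p hM hN) (by positivity)
  have hmem : T ^ (1 / (p : ℝ)) ∈ { r : ℝ | ∃ (N : Matrix (Fin s) (Fin s) ℂ)
      (hN : N.PosSemidef), r = schattenNorm (p : ℝ) (hM.sub hN.isHermitian) } := by
    obtain ⟨N, hN, hsum⟩ := exists_good_N p hp hM
    refine ⟨N, hN, ?_⟩
    unfold schattenNorm
    simp_rw [Real.rpow_natCast]
    rw [hsum]
  have hdist : distPSD (p : ℝ) hM = T ^ (1 / (p : ℝ)) := by
    unfold distPSD
    exact le_antisymm (csInf_le ⟨T ^ (1 / (p : ℝ)), fun r hr => hlb r hr⟩ hmem)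
      (le_csInf ⟨_, hmem⟩ hlb)
  rw [hdist, ← Real.rpow_natCast (T ^ (1 / (p : ℝ))) p, ← Real.rpow_mul hTnn,
    one_div, inv_mul_cancel₀ hpne, Real.rpow_one]

/-- `d_p(M)^p` equals the infimum of `tr(q(M))` over polynomials `q ≥ f_p`
on `[-1,1]`, and also the supremum of `tr(q(M))` over polynomials `q ≤ f_p` on `[-1,1]`. -/
theorem statement1 (s : ℕ) (p : ℕ) (hp : 1 ≤ p) (M : Matrix (Fin s) (Fin s) ℂ)
    (hM : M.IsHermitian) (hnorm : ∀ i, |hM.eigenvalues i| ≤ 1) :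
    distPSD (p : ℝ) hM ^ p =
      sInf { r : ℝ | ∃ q : Polynomial ℝ,
        (∀ x ∈ Set.Icc (-1 : ℝ) 1, negPart p x ≤ q.eval x) ∧
        r = trFun hM (fun x => q.eval x) } ∧
    distPSD (p : ℝ) hM ^ p =
      sSup { r : ℝ | ∃ q : Polynomial ℝ,
        (∀ x ∈ Set.Icc (-1 : ℝ) 1, q.eval x ≤ negPart p x) ∧
        r = trFun hM (fun x => q.eval x) } := by
  set T : ℝ := (s : ℝ)⁻¹ * ∑ i, negPart p (hM.eigenvalues i) with hT
  have hdp : distPSD (p : ℝ) hM ^ p = T := distPSD_pow_eq p hp hM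
  have hIcc : ∀ i, hM.eigenvalues i ∈ Set.Icc (-1 : ℝ) 1 := by
    intro i
    have := abs_le.mp (hnorm i)
    exact Set.mem_Icc.mpr this
  have hsmul : (s : ℝ)⁻¹ * (s : ℝ) ≤ 1 := by
    rcases Nat.eq_zero_or_pos s with h | h
    · simp [h]
    · rw [inv_mul_cancel₀ (by positivity)]
  -- approximation by polynomials
  have happrox : ∀ ε : ℝ, 0 < ε → ∃ q : Polynomial ℝ,
      (∀ x ∈ Set.Icc (-1 : ℝ) 1, negPart p x ≤ q.eval x) ∧
      (∀ x ∈ Set.Icc (-1 : ℝ) 1, q.eval x ≤ negPart p x + ε) := by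
    intro ε hε
    obtain ⟨q₀, hq₀⟩ := exists_polynomial_near_of_continuousOn (-1) 1 (_root_.negPart p)
      ((continuous_negPart' p hp).continuousOn) (ε / 2) (by linarith)
    refine ⟨q₀ + Polynomial.C (ε / 2), fun x hx => ?_, fun x hx => ?_⟩
    · have := abs_lt.mp (hq₀ x hx)
      simp only [Polynomial.eval_add, Polynomial.eval_C]
      linarith [this.1]
    · have := abs_lt.mp (hq₀ x hx)
      simp only [Polynomial.eval_add, Polynomial.eval_C]
      linarith [this.2]
  -- trace bounds
  have htr_ge : ∀ q : Polynomial ℝ, (∀ x ∈ Set.Icc (-1 : ℝ) 1, negPart p x ≤ q.eval x) →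
      T ≤ trFun hM (fun x => q.eval x) := by
    intro q hq
    unfold trFun
    exact mul_le_mul_of_nonneg_left
      (Finset.sum_le_sum fun i _ => hq _ (hIcc i)) (by positivity)
  have htr_le : ∀ q : Polynomial ℝ, (∀ x ∈ Set.Icc (-1 : ℝ) 1, q.eval x ≤ negPart p x) →
      trFun hM (fun x => q.eval x) ≤ T := by
    intro q hq
    unfold trFun
    exact mul_le_mul_of_nonneg_left
      (Finset.sum_le_sum fun i _ => hq _ (hIcc i)) (by positivity)
  have htr_add : ∀ (ε : ℝ), 0 ≤ ε → ∀ q : Polynomial ℝ,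
      (∀ x ∈ Set.Icc (-1 : ℝ) 1, q.eval x ≤ negPart p x + ε) →
      trFun hM (fun x => q.eval x) ≤ T + ε := by
    intro ε hε q hq
    unfold trFun
    calc (s : ℝ)⁻¹ * ∑ i, q.eval (hM.eigenvalues i)
        ≤ (s : ℝ)⁻¹ * ∑ i, (negPart p (hM.eigenvalues i) + ε) :=
          mul_le_mul_of_nonneg_left
            (Finset.sum_le_sum fun i _ => hq _ (hIcc i)) (by positivity)
      _ = T + (s : ℝ)⁻¹ * (s : ℝ) * ε := by
          rw [Finset.sum_add_distrib]
          simp [hT, mul_add, Finset.sum_const, mul_assoc]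
      _ ≤ T + ε := by nlinarith
  constructor
  · -- inf part
    rw [hdp]
    have hbdd : BddBelow { r : ℝ | ∃ q : Polynomial ℝ,
        (∀ x ∈ Set.Icc (-1 : ℝ) 1, negPart p x ≤ q.eval x) ∧
        r = trFun hM (fun x => q.eval x) } := by
      refine ⟨T, ?_⟩
      rintro r ⟨q, hq, rfl⟩
      exact htr_ge q hq
    refine le_antisymm ?_ ?_
    · apply le_csInf
      · obtain ⟨q, hq, -⟩ := happrox 1 one_pos
        exact ⟨_, q, hq, rfl⟩
      · rintro r ⟨q, hq, rfl⟩
        exact htr_ge q hq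
    · apply le_of_forall_pos_le_add
      intro ε hε
      obtain ⟨q, hq1, hq2⟩ := happrox ε hε
      calc sInf _ ≤ trFun hM (fun x => q.eval x) := csInf_le hbdd ⟨q, hq1, rfl⟩
        _ ≤ T + ε := htr_add ε hε.le q hq2
  · -- sup part
    rw [hdp]
    have hbdd : BddAbove { r : ℝ | ∃ q : Polynomial ℝ,
        (∀ x ∈ Set.Icc (-1 : ℝ) 1, q.eval x ≤ negPart p x) ∧
        r = trFun hM (fun x => q.eval x) } := by
      refine ⟨T, ?_⟩
      rintro r ⟨q, hq, rfl⟩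
      exact htr_le q hq
    refine le_antisymm ?_ ?_
    · apply le_of_forall_pos_le_add
      intro ε hε
      obtain ⟨q₀, hq1, hq2⟩ := happrox ε hε
      set q : Polynomial ℝ := q₀ - Polynomial.C ε with hqdef
      have hqle : ∀ x ∈ Set.Icc (-1 : ℝ) 1, q.eval x ≤ negPart p x := by
        intro x hx
        have := hq2 x hx
        simp only [hqdef, Polynomial.eval_sub, Polynomial.eval_C]
        linarith
      have hqge : T - ε ≤ trFun hM (fun x => q.eval x) := by
        have h1 : ∀ x ∈ Set.Icc (-1 : ℝ) 1, negPart p x - ε ≤ q.eval x := by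
          intro x hx
          have := hq1 x hx
          simp only [hqdef, Polynomial.eval_sub, Polynomial.eval_C]
          linarith
        unfold trFun
        have := mul_le_mul_of_nonneg_left
          (Finset.sum_le_sum fun i (_ : i ∈ Finset.univ) => h1 _ (hIcc i))
          (show (0:ℝ) ≤ (s : ℝ)⁻¹ by positivity)
        calc T - ε ≤ (s : ℝ)⁻¹ * ∑ i, (negPart p (hM.eigenvalues i) - ε) := by
              rw [Finset.sum_sub_distrib]
              simp only [hT, mul_sub, Finset.sum_const, Finset.card_univ, Fintype.card_fin,
                nsmul_eq_mul]
              have : (s : ℝ)⁻¹ * ((s : ℝ) * ε) ≤ ε := by nlinarith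
              linarith
          _ ≤ (s : ℝ)⁻¹ * ∑ i, q.eval (hM.eigenvalues i) := this
      calc T ≤ trFun hM (fun x => q.eval x) + ε := by linarith
        _ ≤ sSup _ + ε := by
            have : trFun hM (fun x => q.eval x) ≤ sSup { r : ℝ | ∃ q : Polynomial ℝ,
                (∀ x ∈ Set.Icc (-1 : ℝ) 1, q.eval x ≤ negPart p x) ∧
                r = trFun hM (fun x => q.eval x) } := le_csSup hbdd ⟨q, hqle, rfl⟩
            linarith
    · apply csSup_le
      · refine ⟨trFun hM (fun x => (0 : Polynomial ℝ).eval x), 0, fun x _ => ?_, rfl⟩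
        simpa using negPart_nonneg' p x
      · rintro r ⟨q, hq, rfl⟩
        exact htr_le q hq

end
end

section
/- Let p ≥ 1 be an integer, M a Hermitian s×s complex matrix with ‖M‖_∞ ≤ 1, and q ∈ ℝ[x] a polynomial with f_p(x) ≤ q(x) for all x ∈ [−1,1]. Then d_p(M) ≤ tr(q(M))^{1/p}. -/
open scoped ComplexOrder

noncomputable section

open Polynomial in
lemma charpoly_conj_aux {n : Type*} [Fintype n] [DecidableEq n]
    (U A V : Matrix n n ℂ) (hUV : U * V = 1) :
    (U * A * V).charpoly = A.charpoly := by
  have hmap : ∀ (X Y : Matrix n n ℂ),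
      (X * Y).map (Polynomial.C : ℂ →+* ℂ[X]) = X.map Polynomial.C * Y.map Polynomial.C := by
    intro X Y
    exact Matrix.map_mul
  have hcm : Matrix.charmatrix (U * A * V)
      = U.map Polynomial.C * Matrix.charmatrix A * V.map Polynomial.C := by
    unfold Matrix.charmatrix
    rw [Matrix.mul_sub, Matrix.sub_mul]
    congr 1
    · have hc : Commute (Matrix.scalar n (Polynomial.X : ℂ[X])) (V.map Polynomial.C) :=
        Matrix.scalar_commute _ (fun r' => Commute.all _ _) _
      rw [Matrix.mul_assoc, hc.eq, ← Matrix.mul_assoc, ← hmap U V, hUV]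
      simp
    · simp only [RingHom.mapMatrix_apply]
      rw [hmap, hmap]
  rw [Matrix.charpoly, Matrix.charpoly, hcm, Matrix.det_mul, Matrix.det_mul]
  calc (U.map Polynomial.C).det * (Matrix.charmatrix A).det * (V.map Polynomial.C).det
      = (Matrix.charmatrix A).det * ((U.map Polynomial.C).det * (V.map Polynomial.C).det) := by
        ring
    _ = (Matrix.charmatrix A).det := by
        rw [← Matrix.det_mul, ← hmap, hUV]; simp

open Polynomial in
lemma charpoly_diagonal_aux {n : Type*} [Fintype n] [DecidableEq n] (d : n → ℂ) :
    (Matrix.diagonal d).charpoly = ∏ i, (Polynomial.X - Polynomial.C (d i)) := by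
  have hcm : Matrix.charmatrix (Matrix.diagonal d)
      = Matrix.diagonal (fun i => Polynomial.X - Polynomial.C (d i)) := by
    ext i j
    by_cases h : i = j
    · subst h; simp [Matrix.charmatrix_apply_eq]
    · rw [Matrix.charmatrix_apply_ne _ _ _ h, Matrix.diagonal_apply_ne _ h,
        Matrix.diagonal_apply_ne _ h]
      simp
  rw [Matrix.charpoly, hcm, Matrix.det_diagonal]

open Polynomial in
lemma charpoly_of_conj_diag {n : Type*} [Fintype n] [DecidableEq n]
    {A : Matrix n n ℂ} {U : Matrix n n ℂ} (hU : U ∈ Matrix.unitaryGroup n ℂ)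
    (d : n → ℂ) (hA : A = U * Matrix.diagonal d * star U) :
    A.charpoly = ∏ i, (Polynomial.X - Polynomial.C (d i)) := by
  rw [hA, charpoly_conj_aux U _ (star U) (Matrix.mem_unitaryGroup_iff.mp hU),
    charpoly_diagonal_aux]

open Polynomial in
/-- If a Hermitian matrix is a unitary conjugate of a real diagonal matrix, then any sum of a
function of its eigenvalues equals the corresponding sum over the diagonal entries. -/
lemma sum_f_eigenvalues_eq {n : Type*} [Fintype n] [DecidableEq n]
    {A : Matrix n n ℂ} (hA : A.IsHermitian) {U : Matrix n n ℂ}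
    (hU : U ∈ Matrix.unitaryGroup n ℂ) (d : n → ℝ)
    (heq : A = U * Matrix.diagonal (fun i => (d i : ℂ)) * star U) (f : ℝ → ℝ) :
    ∑ i, f (hA.eigenvalues i) = ∑ i, f (d i) := by
  have h1 : A.charpoly = ∏ i, (Polynomial.X - Polynomial.C ((hA.eigenvalues i : ℝ) : ℂ)) := by
    refine charpoly_of_conj_diag (hA.eigenvectorUnitary).2 _ ?_
    exact hA.spectral_theorem
  have h2 : A.charpoly = ∏ i, (Polynomial.X - Polynomial.C ((d i : ℝ) : ℂ)) :=
    charpoly_of_conj_diag hU _ heq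
  -- deduce multiset equality via roots
  have hroots : (Finset.univ.val.map (fun i => ((hA.eigenvalues i : ℝ) : ℂ)))
      = (Finset.univ.val.map (fun i => ((d i : ℝ) : ℂ))) := by
    have hr : ∀ (g : n → ℂ),
        (∏ i, (Polynomial.X - Polynomial.C (g i))).roots = Finset.univ.val.map g := by
      intro g
      rw [show (∏ i, (Polynomial.X - Polynomial.C (g i)))
          = ((Finset.univ.val.map g).map (fun a => Polynomial.X - Polynomial.C a)).prod by
        rw [Multiset.map_map]; rfl]
      exact Polynomial.roots_multiset_prod_X_sub_C _
    rw [← hr, ← hr, ← h1, ← h2]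
  have key : ∀ (g : n → ℝ), ∑ i, f (g i)
      = ((Finset.univ.val.map (fun i => ((g i : ℝ) : ℂ))).map (fun z => f z.re)).sum := by
    intro g
    rw [Multiset.map_map, Finset.sum_eq_multiset_sum]
    rfl
  rw [key, key, hroots]

/-- if `f_p ≤ q` on `[-1,1]`, then `d_p(M) ≤ tr(q(M))^(1/p)`. -/
theorem statement3 (s : ℕ) (p : ℕ) (hp : 1 ≤ p) (M : Matrix (Fin s) (Fin s) ℂ)
    (hM : M.IsHermitian) (hnorm : ∀ i, |hM.eigenvalues i| ≤ 1) (q : Polynomial ℝ)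
    (hq : ∀ x ∈ Set.Icc (-1 : ℝ) 1, negPart p x ≤ q.eval x) :
    distPSD (p : ℝ) hM ≤ trFun hM (fun x => q.eval x) ^ (1 / (p : ℝ)) := by
  classical
  set lam := hM.eigenvalues with hlam
  set U : Matrix (Fin s) (Fin s) ℂ := (hM.eigenvectorUnitary : Matrix (Fin s) (Fin s) ℂ) with hU
  set N : Matrix (Fin s) (Fin s) ℂ :=
    U * Matrix.diagonal (fun i => ((max (lam i) 0 : ℝ) : ℂ)) * star U with hNdef
  have hN : N.PosSemidef := by
    have hD : (Matrix.diagonal (fun i => ((max (lam i) 0 : ℝ) : ℂ))).PosSemidef := by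
      refine Matrix.posSemidef_diagonal_iff.mpr fun i => ?_
      rw [Complex.zero_le_real]
      exact le_max_right _ _
    exact hD.mul_mul_conjTranspose_same U
  have hMN : M - N = U * Matrix.diagonal (fun i => ((min (lam i) 0 : ℝ) : ℂ)) * star U := by
    have hspec := hM.spectral_theorem
    rw [hNdef]
    nth_rewrite 1 [hspec]
    rw [Unitary.conjStarAlgAut_apply, ← hU]
    rw [← Matrix.sub_mul, ← Matrix.mul_sub, Matrix.diagonal_sub]
    congr 2
    funext i j
    by_cases h : i = j
    · subst h
      simp only [Matrix.diagonal_apply_eq, Function.comp_apply]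
      have hco : ∀ x : ℝ, (RCLike.ofReal x : ℂ) = (x : ℂ) := fun x => rfl
      rw [hco, ← Complex.ofReal_sub]
      norm_cast
      rcases le_total (lam i) 0 with h | h
      · rw [max_eq_right h, min_eq_left h, sub_zero]
      · rw [max_eq_left h, min_eq_right h, sub_self]
    · rw [Matrix.diagonal_apply_ne _ h, Matrix.diagonal_apply_ne _ h]
  have hsum : ∀ f : ℝ → ℝ, ∑ i, f ((hM.sub hN.isHermitian).eigenvalues i)
      = ∑ i, f (min (lam i) 0) := by
    intro f
    exact sum_f_eigenvalues_eq (hM.sub hN.isHermitian) hM.eigenvectorUnitary.2 _ hMN f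
  have hp0 : (0 : ℝ) < (p : ℝ) := by exact_mod_cast hp.trans_lt' Nat.zero_lt_one
  have h1p : (0 : ℝ) < 1 / (p : ℝ) := by positivity
  -- value of the Schatten norm of M - N
  have hneg : ∀ i, |min (lam i) 0| ^ (p : ℝ) = _root_.negPart p (lam i) := by
    intro i
    unfold _root_.negPart
    rcases lt_or_ge (lam i) 0 with h | h
    · rw [if_pos h, min_eq_left h.le, Real.rpow_natCast]
    · rw [if_neg (not_lt.mpr h), min_eq_right h, abs_zero, Real.zero_rpow (by positivity)]
  have hschat : schattenNorm (p : ℝ) (hM.sub hN.isHermitian)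
      = ((s : ℝ)⁻¹ * ∑ i, _root_.negPart p (lam i)) ^ (1 / (p : ℝ)) := by
    unfold schattenNorm
    rw [hsum (fun x => |x| ^ (p : ℝ))]
    congr 1
    congr 1
    exact Finset.sum_congr rfl fun i _ => hneg i
  have hbase_nonneg : (0 : ℝ) ≤ (s : ℝ)⁻¹ * ∑ i, _root_.negPart p (lam i) := by
    have hnn : ∀ i, (0 : ℝ) ≤ _root_.negPart p (lam i) := by
      intro i; unfold _root_.negPart; split <;> positivity
    exact mul_nonneg (by positivity) (Finset.sum_nonneg fun i _ => hnn i)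
  have hle : schattenNorm (p : ℝ) (hM.sub hN.isHermitian)
      ≤ trFun hM (fun x => q.eval x) ^ (1 / (p : ℝ)) := by
    rw [hschat]
    apply Real.rpow_le_rpow hbase_nonneg _ h1p.le
    unfold _root_.trFun
    apply mul_le_mul_of_nonneg_left _ (by positivity)
    refine Finset.sum_le_sum fun i _ => ?_
    exact hq _ (Set.mem_Icc.mpr (abs_le.mp (hnorm i)))
  refine le_trans ?_ hle
  unfold distPSD
  apply csInf_le
  · refine ⟨0, fun r hr => ?_⟩
    obtain ⟨N', hN', rfl⟩ := hr
    unfold schattenNorm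
    apply Real.rpow_nonneg
    exact mul_nonneg (by positivity)
      (Finset.sum_nonneg fun i _ => Real.rpow_nonneg (abs_nonneg _) _)
  · exact ⟨N, hN, rfl⟩

end
end

section
/- Let p ≥ 1 and m ≥ 1 be integers and M a Hermitian s×s complex matrix with ‖M‖_∞ ≤ 1. Then there exists a Borel probability measure μ on [−1,1] such that ∫ x^k dμ(x) = tr(M^k) for all k = 1,…,m and ∫ f_p dμ = d⁺_{p,m}(M)^p. -/
open scoped ComplexOrder

noncomputable section

/-- The upper bound `d⁺_{p,m}(M)`. -/
def dplus {s : ℕ} (p m : ℕ) {M : Matrix (Fin s) (Fin s) ℂ} (hM : M.IsHermitian) : ℝ :=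
  sInf { r : ℝ | ∃ q : Polynomial ℝ, q.natDegree ≤ m ∧
    (∀ x ∈ Set.Icc (-1 : ℝ) 1, negPart p x ≤ q.eval x) ∧
    r = trFun hM (fun x => q.eval x) ^ (1 / (p : ℝ)) }

/-- The lower bound `d⁻_{p,m}(M)`. -/
def dminus {s : ℕ} (p m : ℕ) {M : Matrix (Fin s) (Fin s) ℂ} (hM : M.IsHermitian) : ℝ :=
  sSup { r : ℝ | ∃ q : Polynomial ℝ, q.natDegree ≤ m ∧
    (∀ x ∈ Set.Icc (-1 : ℝ) 1, q.eval x ≤ negPart p x) ∧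
    r = trFun hM (fun x => q.eval x) ^ (1 / (p : ℝ)) }

open MeasureTheory

open Set Finset


theorem np_eq_max {p : ℕ} (hp : 1 ≤ p) (x : ℝ) :
    _root_.negPart p x = max (-x) 0 ^ p := by
  unfold _root_.negPart
  rcases lt_or_ge x 0 with h | h
  · rw [if_pos h, max_eq_left (by linarith), abs_of_neg h]
  · rw [if_neg (not_lt.2 h), max_eq_right (by linarith), zero_pow (by omega)]

theorem np_nonneg {p : ℕ} (hp : 1 ≤ p) (x : ℝ) : 0 ≤ _root_.negPart p x := by
  rw [np_eq_max hp]; positivity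

theorem np_continuous {p : ℕ} (hp : 1 ≤ p) : Continuous (_root_.negPart p) := by
  have : _root_.negPart p = fun x => max (-x) 0 ^ p := funext (np_eq_max hp)
  rw [this]
  exact (continuous_neg.max continuous_const).pow p

theorem np_le_one {p : ℕ} (hp : 1 ≤ p) {x : ℝ} (hx : x ∈ Set.Icc (-1:ℝ) 1) :
    _root_.negPart p x ≤ 1 := by
  rw [np_eq_max hp]
  refine pow_le_one₀ (le_max_right _ _) ?_
  rcases hx with ⟨h1, h2⟩
  exact max_le (by linarith) zero_le_one

theorem sum_eval {ι : Type*} [Fintype ι] {m : ℕ} (q : Polynomial ℝ) (hq : q.natDegree ≤ m)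
    (w x : ι → ℝ) :
    ∑ i, w i * q.eval (x i)
      = ∑ k ∈ Finset.range (m+1), q.coeff k * ∑ i, w i * x i ^ k := by
  have h : ∀ i : ι, q.eval (x i) = ∑ k ∈ Finset.range (m+1), q.coeff k * x i ^ k := fun i =>
    Polynomial.eval_eq_sum_range' (Nat.lt_succ_of_le hq) (x i)
  simp_rw [h, Finset.mul_sum]
  rw [Finset.sum_comm]
  exact Finset.sum_congr rfl fun k _ => Finset.sum_congr rfl fun i _ => by ring

theorem eval_moments {ι κ : Type*} [Fintype ι] [Fintype κ] {m : ℕ} (q : Polynomial ℝ)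
    (hq : q.natDegree ≤ m) (w xs : ι → ℝ) (w' xs' : κ → ℝ)
    (h : ∀ k ≤ m, ∑ i, w i * xs i ^ k = ∑ i, w' i * xs' i ^ k) :
    ∑ i, w i * q.eval (xs i) = ∑ i, w' i * q.eval (xs' i) := by
  rw [sum_eval q hq, sum_eval q hq]
  exact Finset.sum_congr rfl fun k hk => by
    rw [h k (Nat.lt_succ_iff.mp (Finset.mem_range.mp hk))]

theorem myIsCompact_convexHull {E : Type} [NormedAddCommGroup E] [NormedSpace ℝ E]
    [FiniteDimensional ℝ E] {A : Set E} (hA : IsCompact A) (hne : A.Nonempty) :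
    IsCompact (convexHull ℝ A) := by
  classical
  set N := Module.finrank ℝ E + 1 with hN
  set D : Set ((Fin N → ℝ) × (Fin N → E)) :=
    (stdSimplex ℝ (Fin N)) ×ˢ (Set.univ.pi fun _ => A) with hD
  have hDcomp : IsCompact D :=
    (isCompact_stdSimplex _ _).prod (isCompact_univ_pi fun _ => hA)
  set F : ((Fin N → ℝ) × (Fin N → E)) → E := fun q => ∑ i, q.1 i • q.2 i with hF
  have hFcont : Continuous F := by
    apply continuous_finset_sum
    intro i _
    exact ((continuous_apply i).comp continuous_fst).smul
      ((continuous_apply i).comp continuous_snd)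
  have himg : convexHull ℝ A = F '' D := by
    apply Set.Subset.antisymm
    · intro y hy
      obtain ⟨ι, hfin, z, w, hz, hAI, hw0, hw1, hrep⟩ :=
        eq_pos_convex_span_of_mem_convexHull hy
      have hcard : Fintype.card ι ≤ N := by
        refine (hAI.card_le_finrank_succ).trans ?_
        have := Submodule.finrank_le (vectorSpan ℝ (Set.range z))
        omega
      obtain ⟨e⟩ : Nonempty (ι ↪ Fin N) :=
        Function.Embedding.nonempty_of_card_le (by simpa using hcard)
      obtain ⟨a₀, ha₀⟩ := hne
      set w' : Fin N → ℝ := Function.extend e w 0 with hw'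
      set x' : Fin N → E := Function.extend e z (fun _ => a₀) with hx'
      have hext : ∀ j : Fin N, j ∉ Finset.univ.map e → w' j = 0 := by
        intro j hj
        rw [hw', Function.extend_apply' _ _ _ ?_]
        · rfl
        · rintro ⟨i, rfl⟩
          exact hj (Finset.mem_map_of_mem e (Finset.mem_univ i))
      refine ⟨(w', x'), ⟨⟨?_, ?_⟩, ?_⟩, ?_⟩
      · intro j
        show 0 ≤ w' j
        by_cases hj : ∃ i, e i = j
        · obtain ⟨i, rfl⟩ := hj
          rw [hw', e.injective.extend_apply]
          exact (hw0 i).le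
        · rw [hw', Function.extend_apply' _ _ _ hj]; exact le_refl 0
      · show ∑ j, w' j = 1
        rw [← Finset.sum_subset (Finset.subset_univ (Finset.univ.map e))
          (fun j _ hj => hext j hj)]
        rw [Finset.sum_map]
        simpa only [hw', e.injective.extend_apply] using hw1
      · intro j _
        show x' j ∈ A
        by_cases hj : ∃ i, e i = j
        · obtain ⟨i, rfl⟩ := hj
          rw [hx', e.injective.extend_apply]
          exact hz (Set.mem_range_self i)
        · rw [hx', Function.extend_apply' _ _ _ hj]; exact ha₀
      · show F (w', x') = y
        rw [hF]
        simp only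
        rw [← Finset.sum_subset (Finset.subset_univ (Finset.univ.map e))
          (fun j _ hj => by rw [hext j hj, zero_smul])]
        rw [Finset.sum_map]
        simp only [hw', hx', e.injective.extend_apply]
        exact hrep
    · rintro y ⟨⟨w, x⟩, ⟨⟨hw0, hw1⟩, hx⟩, rfl⟩
      exact (convex_convexHull ℝ A).sum_mem (fun i _ => hw0 i) hw1
        (fun i _ => subset_convexHull ℝ A (hx i (Set.mem_univ i)))
  rw [himg]
  exact hDcomp.image hFcont

theorem trace_pow_eq {s : ℕ} {M : Matrix (Fin s) (Fin s) ℂ} (hM : M.IsHermitian) (k : ℕ) :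
    (M ^ k).trace = ∑ i, ((hM.eigenvalues i : ℂ)) ^ k := by
  set U : Matrix (Fin s) (Fin s) ℂ := (hM.eigenvectorUnitary : Matrix (Fin s) (Fin s) ℂ) with hUdef
  set D : Matrix (Fin s) (Fin s) ℂ :=
    Matrix.diagonal (RCLike.ofReal ∘ hM.eigenvalues) with hDdef
  have hU : U * star U = 1 := (Matrix.mem_unitaryGroup_iff).mp hM.eigenvectorUnitary.2
  have hU' : star U * U = 1 := (Matrix.mem_unitaryGroup_iff').mp hM.eigenvectorUnitary.2
  have hpow : ∀ k : ℕ, M ^ k = U * D ^ k * star U := by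
    intro k
    induction k with
    | zero => rw [pow_zero, pow_zero, Matrix.mul_one, hU]
    | succ n ih =>
      rw [pow_succ, ih]
      conv_lhs => rw [hM.spectral_theorem, Unitary.conjStarAlgAut_apply]
      rw [pow_succ]
      rw [show (U * D ^ n * star U) * (U * D * star U)
          = U * D ^ n * (star U * U) * D * star U by
        simp only [Matrix.mul_assoc]]
      rw [hU', Matrix.mul_one]
      simp only [Matrix.mul_assoc]
  rw [hpow, Matrix.trace_mul_comm, ← Matrix.mul_assoc, hU', Matrix.one_mul,
    Matrix.diagonal_pow, Matrix.trace_diagonal]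
  simp [RCLike.ofReal]

theorem extract_rep {m p : ℕ} {y : Fin (m+1) → ℝ}
    (hy : y ∈ convexHull ℝ
      ((fun x : ℝ => Fin.snoc (fun j : Fin m => x ^ ((j:ℕ)+1)) (_root_.negPart p x)) ''
        Set.Icc (-1:ℝ) 1)) :
    ∃ (ι : Type) (_ : Fintype ι) (w : ι → ℝ) (xs : ι → ℝ),
      (∀ i, 0 ≤ w i) ∧ (∑ i, w i = 1) ∧ (∀ i, xs i ∈ Set.Icc (-1:ℝ) 1) ∧
      (∀ j : Fin m, ∑ i, w i * xs i ^ ((j:ℕ)+1) = y j.castSucc) ∧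
      (∑ i, w i * _root_.negPart p (xs i) = y (Fin.last m)) := by
  obtain ⟨ι, hfin, z, w, hz, hAI, hw0, hw1, hrep⟩ := eq_pos_convex_span_of_mem_convexHull hy
  have hmem : ∀ i : ι, ∃ x, x ∈ Set.Icc (-1:ℝ) 1 ∧
      (Fin.snoc (fun j : Fin m => x ^ ((j:ℕ)+1)) (_root_.negPart p x) : Fin (m+1) → ℝ) = z i :=
    fun i => hz (Set.mem_range_self i)
  choose xs hxs hphi using hmem
  have hco : ∀ j : Fin (m+1), ∑ i, w i * z i j = y j := by
    intro j
    rw [← hrep, Finset.sum_apply]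
    exact Finset.sum_congr rfl fun i _ => rfl
  refine ⟨ι, hfin, w, xs, fun i => (hw0 i).le, hw1, hxs, ?_, ?_⟩
  · intro j
    rw [← hco j.castSucc]
    refine Finset.sum_congr rfl fun i _ => ?_
    rw [← hphi i, Fin.snoc_castSucc]
  · rw [← hco (Fin.last m)]
    refine Finset.sum_congr rfl fun i _ => ?_
    rw [← hphi i, Fin.snoc_last]


/-- there is a Borel probability measure on `[-1,1]` matching the first `m`
normalized moments of `M` and realizing `d⁺_{p,m}(M)^p` as `∫ f_p dμ`. -/
theorem statement7 (s : ℕ) (p m : ℕ) (hp : 1 ≤ p) (hm : 1 ≤ m)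
    (M : Matrix (Fin s) (Fin s) ℂ) (hM : M.IsHermitian)
    (hnorm : ∀ i, |hM.eigenvalues i| ≤ 1) :
    ∃ μ : Measure ℝ, IsProbabilityMeasure μ ∧ μ (Set.Icc (-1 : ℝ) 1)ᶜ = 0 ∧
      (∀ k, 1 ≤ k → k ≤ m → ((M ^ k).trace / (s : ℂ) = ((∫ x, x ^ k ∂μ : ℝ) : ℂ))) ∧
      ∫ x, negPart p x ∂μ = dplus p m hM ^ p := by
  classical
  have hpRne : (p:ℝ) ≠ 0 := by positivity
  rcases Nat.eq_zero_or_pos s with hs0 | hs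
  · -- degenerate case s = 0
    subst hs0
    refine ⟨Measure.dirac 0, by infer_instance, ?_, ?_, ?_⟩
    · rw [Measure.dirac_apply' _ (measurableSet_Icc.compl)]
      rw [Set.indicator_of_notMem]
      simp only [Set.mem_compl_iff, not_not, Set.mem_Icc]
      norm_num
    · intro k hk1 hk2
      have h1 : (M ^ k).trace = 0 := by
        simp [Matrix.trace]
      rw [h1, MeasureTheory.integral_dirac]
      rw [zero_pow (by omega : k ≠ 0)]
      simp
    · have h0 : ∀ f : ℝ → ℝ, trFun hM f = 0 := by
        intro f; unfold trFun; simp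
      have hset : { r : ℝ | ∃ q : Polynomial ℝ, q.natDegree ≤ m ∧
          (∀ x ∈ Set.Icc (-1 : ℝ) 1, _root_.negPart p x ≤ q.eval x) ∧
          r = trFun hM (fun x => q.eval x) ^ (1 / (p : ℝ)) } = {0} := by
        apply Set.Subset.antisymm
        · rintro r ⟨q, hq1, hq2, rfl⟩
          rw [h0, Real.zero_rpow (by simpa using hpRne)]
          rfl
        · rintro r hr
          rw [Set.mem_singleton_iff] at hr
          refine ⟨Polynomial.C 1, by simp, ?_, ?_⟩
          · intro x hx
            rw [Polynomial.eval_C]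
            exact np_le_one hp hx
          · rw [h0, Real.zero_rpow (by simpa using hpRne), hr]
      have hdp : dplus p m hM = 0 := by
        unfold dplus; rw [hset, csInf_singleton]
      rw [hdp, zero_pow (by omega : p ≠ 0), MeasureTheory.integral_dirac]
      unfold _root_.negPart
      simp
  · -- main case s ≥ 1
    have hsne : (s:ℝ) ≠ 0 := by positivity
    set lam : Fin s → ℝ := hM.eigenvalues with hlam
    have hlamK : ∀ i, lam i ∈ Set.Icc (-1:ℝ) 1 := by
      intro i
      rcases abs_le.mp (hnorm i) with ⟨h1, h2⟩
      exact ⟨h1, h2⟩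
    set φ : ℝ → (Fin (m+1) → ℝ) :=
      fun x => Fin.snoc (fun j : Fin m => x ^ ((j:ℕ)+1)) (_root_.negPart p x) with hφ
    set mom : ℕ → ℝ := fun k => (s:ℝ)⁻¹ * ∑ i, lam i ^ k with hmom
    set S : Set (Fin (m+1) → ℝ) := convexHull ℝ (φ '' Set.Icc (-1:ℝ) 1) with hS
    set Aset : Set ℝ := {a : ℝ | ∃ q : Polynomial ℝ, q.natDegree ≤ m ∧
      (∀ x ∈ Set.Icc (-1:ℝ) 1, _root_.negPart p x ≤ q.eval x) ∧
      a = trFun hM (fun x => q.eval x)} with hAset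
    have hφcont : Continuous φ := by
      apply continuous_pi
      intro j
      refine Fin.lastCases ?_ ?_ j
      · have h : (fun x => φ x (Fin.last m)) = _root_.negPart p := by
          funext x; rw [hφ]; exact Fin.snoc_last _ _
        rw [h]
        exact np_continuous hp
      · intro j
        have h : (fun x => φ x j.castSucc) = fun x => x ^ ((j:ℕ)+1) := by
          funext x; rw [hφ]; exact Fin.snoc_castSucc _ _ _
        rw [h]
        exact continuous_pow _
    have hScomp : IsCompact S :=
      myIsCompact_convexHull (isCompact_Icc.image hφcont)
        ⟨φ 0, Set.mem_image_of_mem _ (by norm_num)⟩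
    have hSconv : Convex ℝ S := convex_convexHull ℝ _
    have hSclosed : IsClosed S := hScomp.isClosed
    have htrsum : ∀ f : ℝ → ℝ, trFun hM f = ∑ i, (s:ℝ)⁻¹ * f (lam i) := by
      intro f; unfold trFun; rw [Finset.mul_sum]
    have hunif : ∑ i : Fin s, (s:ℝ)⁻¹ = 1 := by
      rw [Finset.sum_const, Finset.card_univ, Fintype.card_fin, nsmul_eq_mul]
      field_simp
    have hA0 : ∀ a ∈ Aset, 0 ≤ a := by
      rintro a ⟨q, hq1, hq2, rfl⟩
      rw [htrsum]
      apply Finset.sum_nonneg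
      intro i _
      have h := (np_nonneg hp (lam i)).trans (hq2 (lam i) (hlamK i))
      positivity
    have hA1 : (1:ℝ) ∈ Aset := by
      refine ⟨Polynomial.C 1, by simp, ?_, ?_⟩
      · intro x hx
        rw [Polynomial.eval_C]; exact np_le_one hp hx
      · rw [htrsum]; simp only [Polynomial.eval_C, mul_one]; rw [hunif]
    have hAbdd : BddBelow Aset := ⟨0, fun a ha => hA0 a ha⟩
    have hAne : Aset.Nonempty := ⟨1, hA1⟩
    -- weak duality
    have hweak : ∀ t : ℝ,
        (Fin.snoc (fun j : Fin m => mom ((j:ℕ)+1)) t : Fin (m+1) → ℝ) ∈ S →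
        ∀ a ∈ Aset, t ≤ a := by
      intro t ht a ha
      obtain ⟨q, hq1, hq2, rfl⟩ := ha
      rw [hS, hφ] at ht
      obtain ⟨ι, hfin, w, xs, hw0, hw1, hxs, hcoord, hlast⟩ := extract_rep ht
      simp only [Fin.snoc_castSucc] at hcoord
      simp only [Fin.snoc_last] at hlast
      have hmoms : ∀ k ≤ m, ∑ i, w i * xs i ^ k = ∑ i : Fin s, (s:ℝ)⁻¹ * lam i ^ k := by
        intro k hk
        have hrhs : ∑ i : Fin s, (s:ℝ)⁻¹ * lam i ^ k = mom k := by
          simp only [hmom]; rw [Finset.mul_sum]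
        rcases Nat.eq_zero_or_pos k with rfl | hk1
        · simp only [pow_zero, mul_one]
          rw [hw1, hunif]
        · have hj : k - 1 < m := by omega
          have h1 := hcoord ⟨k-1, hj⟩
          have hk' : k - 1 + 1 = k := by omega
          rw [hk'] at h1
          rw [h1, hrhs]
      calc t = ∑ i, w i * _root_.negPart p (xs i) := hlast.symm
        _ ≤ ∑ i, w i * q.eval (xs i) :=
            Finset.sum_le_sum fun i _ =>
              mul_le_mul_of_nonneg_left (hq2 _ (hxs i)) (hw0 i)
        _ = ∑ i : Fin s, (s:ℝ)⁻¹ * q.eval (lam i) := eval_moments q hq1 w xs _ lam hmoms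
        _ = trFun hM (fun x => q.eval x) := by rw [htrsum]
    -- the empirical point
    have hψt0 : (Fin.snoc (fun j : Fin m => mom ((j:ℕ)+1)) (trFun hM (_root_.negPart p))
        : Fin (m+1) → ℝ) ∈ S := by
      have hrepr : (Fin.snoc (fun j : Fin m => mom ((j:ℕ)+1)) (trFun hM (_root_.negPart p))
          : Fin (m+1) → ℝ) = ∑ i : Fin s, (s:ℝ)⁻¹ • φ (lam i) := by
        funext j
        rw [Finset.sum_apply]
        refine Fin.lastCases ?_ ?_ j
        · simp only [Fin.snoc_last, Pi.smul_apply, hφ, smul_eq_mul]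
          rw [htrsum]
        · intro j
          simp only [Fin.snoc_castSucc, Pi.smul_apply, hφ, smul_eq_mul, hmom]
          rw [Finset.mul_sum]
      rw [hrepr]
      refine hSconv.sum_mem (fun i _ => by positivity) hunif (fun i _ => ?_)
      rw [hS]
      exact subset_convexHull ℝ _ (Set.mem_image_of_mem φ (hlamK i))
    -- the fiber T
    set T : Set ℝ := {t : ℝ | (Fin.snoc (fun j : Fin m => mom ((j:ℕ)+1)) t
      : Fin (m+1) → ℝ) ∈ S} with hT
    have hTne : T.Nonempty := ⟨trFun hM (_root_.negPart p), hψt0⟩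
    have hψeq : (fun t : ℝ => (Fin.snoc (fun j : Fin m => mom ((j:ℕ)+1)) t : Fin (m+1) → ℝ))
        = fun t => (Fin.snoc (fun j : Fin m => mom ((j:ℕ)+1)) 0 : Fin (m+1) → ℝ)
          + t • (Pi.single (Fin.last m) 1 : Fin (m+1) → ℝ) := by
      funext t j
      refine Fin.lastCases ?_ ?_ j
      · simp [Fin.snoc_last]
      · intro j
        have hne : (Fin.castSucc j) ≠ Fin.last m := Fin.castSucc_lt_last j |>.ne
        simp [Fin.snoc_castSucc, Pi.single_apply, hne]
    have hTclosed : IsClosed T := by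
      rw [hT]
      have hcont : Continuous (fun t : ℝ =>
          (Fin.snoc (fun j : Fin m => mom ((j:ℕ)+1)) t : Fin (m+1) → ℝ)) := by
        rw [hψeq]
        exact continuous_const.add (continuous_id.smul continuous_const)
      exact IsClosed.preimage hcont hSclosed
    have hTbdd : BddAbove T := by
      obtain ⟨C, hC⟩ := hScomp.isBounded.exists_norm_le
      refine ⟨C, fun t ht => ?_⟩
      have h1 : |t| ≤ ‖(Fin.snoc (fun j : Fin m => mom ((j:ℕ)+1)) t : Fin (m+1) → ℝ)‖ := by
        have := norm_le_pi_norm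
          (Fin.snoc (fun j : Fin m => mom ((j:ℕ)+1)) t : Fin (m+1) → ℝ) (Fin.last m)
        rwa [Fin.snoc_last, Real.norm_eq_abs] at this
      exact (le_abs_self t).trans (h1.trans (hC _ ht))
    set tstar : ℝ := sSup T with htstar
    have htsT : tstar ∈ T := hTclosed.csSup_mem hTne hTbdd
    have hub : tstar ≤ sInf Aset :=
      le_csInf hAne fun a ha => csSup_le hTne fun t ht => hweak t ht a ha
    -- strong duality via separation
    have hge : sInf Aset ≤ tstar := by
      by_contra hcon
      push_neg at hcon
      set d : ℝ := (tstar + sInf Aset)/2 with hd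
      have hd1 : tstar < d := by rw [hd]; linarith
      have hd2 : d < sInf Aset := by rw [hd]; linarith
      have hdnot : (Fin.snoc (fun j : Fin m => mom ((j:ℕ)+1)) d : Fin (m+1) → ℝ) ∉ S := by
        intro hmem
        exact absurd (le_csSup hTbdd hmem) (not_le.2 hd1)
      obtain ⟨g, u, hgS, hgz⟩ := geometric_hahn_banach_closed_point hSconv hSclosed hdnot
      have hdecomp : ∀ y : Fin (m+1) → ℝ, g y = ∑ j, y j * g (Pi.single j 1) := by
        intro y
        have hy : y = ∑ j, y j • (Pi.single j 1 : Fin (m+1) → ℝ) := by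
          funext j'
          rw [Finset.sum_apply]
          simp [Pi.single_apply]
        conv_lhs => rw [hy]
        rw [map_sum]
        exact Finset.sum_congr rfl fun j _ => by rw [_root_.map_smul]; rfl
      set b : ℝ := g (Pi.single (Fin.last m) 1) with hb0
      set av : Fin m → ℝ := fun j => g (Pi.single j.castSucc 1) with hav
      have hgψ : ∀ t : ℝ, g (Fin.snoc (fun j : Fin m => mom ((j:ℕ)+1)) t)
          = (∑ j : Fin m, mom ((j:ℕ)+1) * av j) + t * b := by
        intro t
        rw [hdecomp, Fin.sum_univ_castSucc]
        simp only [Fin.snoc_castSucc, Fin.snoc_last, hav, hb0]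
      have hgφ : ∀ x : ℝ, g (φ x)
          = (∑ j : Fin m, x ^ ((j:ℕ)+1) * av j) + _root_.negPart p x * b := by
        intro x
        rw [hdecomp, Fin.sum_univ_castSucc, hφ]
        simp only [Fin.snoc_castSucc, Fin.snoc_last, hav, hb0]
      have hts : g (Fin.snoc (fun j : Fin m => mom ((j:ℕ)+1)) tstar) < u := hgS _ htsT
      rw [hgψ] at hts
      rw [hgψ] at hgz
      have hbpos : 0 < b := by
        rcases lt_or_ge 0 b with h | h
        · exact h
        · exfalso
          have : d * b ≤ tstar * b := mul_le_mul_of_nonpos_right hd1.le h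
          linarith
      set q : Polynomial ℝ := Polynomial.C (u/b)
        - ∑ j : Fin m, Polynomial.C (av j / b) * Polynomial.X ^ ((j:ℕ)+1) with hq
      have heval : ∀ x : ℝ, q.eval x = u/b - ∑ j : Fin m, (av j / b) * x ^ ((j:ℕ)+1) := by
        intro x
        rw [hq]
        simp [Polynomial.eval_finset_sum]
      have hqdeg : q.natDegree ≤ m := by
        rw [hq]
        refine (Polynomial.natDegree_sub_le _ _).trans (max_le (by simp) ?_)
        refine Polynomial.natDegree_sum_le_of_forall_le _ _ fun j _ => ?_
        refine (Polynomial.natDegree_C_mul_le _ _).trans ?_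
        rw [Polynomial.natDegree_X_pow]
        omega
      have hqfeas : ∀ x ∈ Set.Icc (-1:ℝ) 1, _root_.negPart p x ≤ q.eval x := by
        intro x hx
        have h1 : g (φ x) < u := hgS _ (by
          rw [hS]; exact subset_convexHull ℝ _ (Set.mem_image_of_mem φ hx))
        rw [hgφ] at h1
        have hqb : q.eval x * b = u - ∑ j : Fin m, x ^ ((j:ℕ)+1) * av j := by
          rw [heval, sub_mul, Finset.sum_mul, div_mul_cancel₀ _ hbpos.ne']
          congr 1
          refine Finset.sum_congr rfl fun j _ => ?_
          field_simp
        refine le_of_lt ((mul_lt_mul_iff_of_pos_right hbpos).mp ?_)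
        rw [hqb]
        linarith
      have hqval : trFun hM (fun x => q.eval x) < sInf Aset := by
        have e1 : ∀ i : Fin s, (s:ℝ)⁻¹ * q.eval (lam i)
            = (s:ℝ)⁻¹ * (u/b) - ∑ j : Fin m, (av j / b) * ((s:ℝ)⁻¹ * lam i ^ ((j:ℕ)+1)) := by
          intro i
          rw [heval, mul_sub, Finset.mul_sum]
          congr 1
          exact Finset.sum_congr rfl fun j _ => by ring
        have h4 : trFun hM (fun x => q.eval x)
            = u/b - ∑ j : Fin m, (av j / b) * mom ((j:ℕ)+1) := by
          rw [htrsum]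
          simp only [e1]
          rw [Finset.sum_sub_distrib]
          congr 1
          · rw [← Finset.sum_mul, hunif, one_mul]
          · rw [Finset.sum_comm]
            refine Finset.sum_congr rfl fun j _ => ?_
            rw [← Finset.mul_sum]
            congr 1
            simp only [hmom]
            rw [Finset.mul_sum]
        have h6 : trFun hM (fun x => q.eval x) * b
            = u - ∑ j : Fin m, mom ((j:ℕ)+1) * av j := by
          rw [h4, sub_mul, div_mul_cancel₀ _ hbpos.ne', Finset.sum_mul]
          congr 1
          exact Finset.sum_congr rfl fun j _ => by field_simp
        have h7 : trFun hM (fun x => q.eval x) < d := by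
          refine (mul_lt_mul_iff_of_pos_right hbpos).mp ?_
          rw [h6]
          linarith
        exact h7.trans hd2
      have hmemq : trFun hM (fun x => q.eval x) ∈ Aset := ⟨q, hqdeg, hqfeas, rfl⟩
      exact absurd (csInf_le hAbdd hmemq) (not_le.2 hqval)
    have heqts : tstar = sInf Aset := le_antisymm hub hge
    -- dplus ^ p = sInf Aset
    have hcancel : ∀ a : ℝ, 0 ≤ a → (a ^ ((1:ℝ)/(p:ℝ))) ^ p = a := by
      intro a ha
      rw [← Real.rpow_natCast (a ^ ((1:ℝ)/(p:ℝ))) p, ← Real.rpow_mul ha, one_div,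
        inv_mul_cancel₀ hpRne, Real.rpow_one]
    have hRchar : ∀ r : ℝ, (∃ q : Polynomial ℝ, q.natDegree ≤ m ∧
        (∀ x ∈ Set.Icc (-1 : ℝ) 1, _root_.negPart p x ≤ q.eval x) ∧
        r = trFun hM (fun x => q.eval x) ^ (1 / (p : ℝ)))
        ↔ ∃ a ∈ Aset, r = a ^ ((1:ℝ)/(p:ℝ)) := by
      intro r
      constructor
      · rintro ⟨q, h1, h2, rfl⟩
        exact ⟨trFun hM (fun x => q.eval x), ⟨q, h1, h2, rfl⟩, rfl⟩
      · rintro ⟨a, ⟨q, h1, h2, rfl⟩, rfl⟩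
        exact ⟨q, h1, h2, rfl⟩
    have hRbdd : BddBelow { r : ℝ | ∃ q : Polynomial ℝ, q.natDegree ≤ m ∧
        (∀ x ∈ Set.Icc (-1 : ℝ) 1, _root_.negPart p x ≤ q.eval x) ∧
        r = trFun hM (fun x => q.eval x) ^ (1 / (p : ℝ)) } := by
      refine ⟨0, fun r hr => ?_⟩
      obtain ⟨a, ha, rfl⟩ := (hRchar r).mp hr
      exact Real.rpow_nonneg (hA0 a ha) _
    have hRne : { r : ℝ | ∃ q : Polynomial ℝ, q.natDegree ≤ m ∧
        (∀ x ∈ Set.Icc (-1 : ℝ) 1, _root_.negPart p x ≤ q.eval x) ∧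
        r = trFun hM (fun x => q.eval x) ^ (1 / (p : ℝ)) }.Nonempty := by
      refine ⟨(1:ℝ) ^ ((1:ℝ)/(p:ℝ)), ?_⟩
      exact (hRchar _).mpr ⟨1, hA1, rfl⟩
    have hd0 : 0 ≤ dplus p m hM := by
      unfold dplus
      refine Real.sInf_nonneg fun r hr => ?_
      obtain ⟨a, ha, rfl⟩ := (hRchar r).mp hr
      exact Real.rpow_nonneg (hA0 a ha) _
    have hI0 : 0 ≤ sInf Aset := le_csInf hAne fun a ha => hA0 a ha
    have hdp : dplus p m hM ^ p = sInf Aset := by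
      apply le_antisymm
      · refine le_csInf hAne fun a ha => ?_
        have h1 : dplus p m hM ≤ a ^ ((1:ℝ)/(p:ℝ)) := by
          unfold dplus
          exact csInf_le hRbdd ((hRchar _).mpr ⟨a, ha, rfl⟩)
        calc dplus p m hM ^ p ≤ (a ^ ((1:ℝ)/(p:ℝ))) ^ p := pow_le_pow_left₀ hd0 h1 p
          _ = a := hcancel a (hA0 a ha)
      · have key : (sInf Aset) ^ ((1:ℝ)/(p:ℝ)) ≤ dplus p m hM := by
          unfold dplus
          refine le_csInf hRne fun r hr => ?_
          obtain ⟨a, ha, rfl⟩ := (hRchar r).mp hr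
          exact Real.rpow_le_rpow hI0 (csInf_le hAbdd ha) (by positivity)
        calc sInf Aset = ((sInf Aset) ^ ((1:ℝ)/(p:ℝ))) ^ p := (hcancel _ hI0).symm
          _ ≤ dplus p m hM ^ p := pow_le_pow_left₀ (Real.rpow_nonneg hI0 _) key p
    -- construct the measure
    have htsmem : (Fin.snoc (fun j : Fin m => mom ((j:ℕ)+1)) tstar : Fin (m+1) → ℝ)
        ∈ convexHull ℝ ((fun x : ℝ => Fin.snoc (fun j : Fin m => x ^ ((j:ℕ)+1))
          (_root_.negPart p x)) '' Set.Icc (-1:ℝ) 1) := by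
      have h := htsT
      simp only [hT, Set.mem_setOf_eq, hS, hφ] at h
      exact h
    obtain ⟨ι, hfin, w, xs, hw0, hw1, hxs, hcoord, hlast⟩ := extract_rep htsmem
    simp only [Fin.snoc_castSucc] at hcoord
    simp only [Fin.snoc_last] at hlast
    set μ : Measure ℝ := ∑ i, (ENNReal.ofReal (w i)) • Measure.dirac (xs i) with hμ
    have hint : ∀ f : ℝ → ℝ, ∫ x, f x ∂μ = ∑ i, w i * f (xs i) := by
      intro f
      rw [hμ, MeasureTheory.integral_finset_sum_measure (fun i _ => ?_)]
      · refine Finset.sum_congr rfl fun i _ => ?_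
        rw [MeasureTheory.integral_smul_measure, MeasureTheory.integral_dirac,
          ENNReal.toReal_ofReal (hw0 i), smul_eq_mul]
      · exact (MeasureTheory.Integrable.smul_measure
          ((MeasureTheory.integrable_const (f (xs i))).congr (MeasureTheory.ae_eq_dirac f).symm)
          ENNReal.ofReal_ne_top)
    refine ⟨μ, ?_, ?_, ?_, ?_⟩
    · constructor
      rw [hμ, Measure.finset_sum_apply]
      have huniv : ∀ i : ι, (ENNReal.ofReal (w i) • Measure.dirac (xs i)) Set.univ
          = ENNReal.ofReal (w i) := by
        intro i
        rw [Measure.smul_apply, measure_univ, smul_eq_mul, mul_one]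
      rw [Finset.sum_congr rfl fun i _ => huniv i,
        ← ENNReal.ofReal_sum_of_nonneg (fun i _ => hw0 i), hw1, ENNReal.ofReal_one]
    · rw [hμ, Measure.finset_sum_apply]
      refine Finset.sum_eq_zero fun i _ => ?_
      rw [Measure.smul_apply, Measure.dirac_apply' _ (measurableSet_Icc.compl),
        Set.indicator_of_notMem (by simpa using hxs i), smul_zero]
    · intro k hk1 hk2
      have hj : k - 1 < m := by omega
      have h1 := hcoord ⟨k-1, hj⟩
      have hk' : k - 1 + 1 = k := by omega
      rw [hk'] at h1
      have h2 : ∫ x, x ^ k ∂μ = mom k := by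
        rw [hint (fun x => x ^ k), h1]
      rw [h2, trace_pow_eq hM k, hmom]
      push_cast
      rw [div_eq_inv_mul]
    · rw [hint (_root_.negPart p), hlast, heqts, hdp]


end
end

section
/- Let p ≥ 1 be an integer and δ ∈ [0,1]. Then the modulus of continuity of the negative part function f_p on [−1,1] satisfies sup{ |f_p(x) − f_p(y)| : x,y ∈ [−1,1], |x−y| ≤ δ } = 1 − (1−δ)^p, and moreover 1 − (1−δ)^p ≤ p·δ. -/
noncomputable section

lemma negPart_eq_max_pow (p : ℕ) (hp : 1 ≤ p) (x : ℝ) :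
    _root_.negPart p x = (max (-x) 0) ^ p := by
  unfold _root_.negPart
  split_ifs with h
  · rw [max_eq_left (by linarith), abs_of_neg h]
  · rw [max_eq_right (by linarith), zero_pow (by omega)]

/-- Key bound: for `0 ≤ b ≤ a ≤ 1`, `a^p - b^p ≤ 1 - (1 - (a - b))^p`. -/
lemma key_bound (p : ℕ) (a b : ℝ) (hb : 0 ≤ b) (hba : b ≤ a) (ha : a ≤ 1) :
    a ^ p - b ^ p ≤ 1 - (1 - (a - b)) ^ p := by
  have h1 : (∑ i ∈ Finset.range p, a ^ i * b ^ (p - 1 - i)) * (a - b) = a ^ p - b ^ p :=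
    geom_sum₂_mul a b p
  have h2 : (∑ i ∈ Finset.range p, (1 : ℝ) ^ i * (1 - (a - b)) ^ (p - 1 - i)) * (1 - (1 - (a - b)))
      = 1 ^ p - (1 - (a - b)) ^ p := geom_sum₂_mul 1 (1 - (a - b)) p
  have hab : 0 ≤ a - b := by linarith
  rw [← h1]
  have : 1 - (1 - (a - b)) ^ p
      = (∑ i ∈ Finset.range p, (1 : ℝ) ^ i * (1 - (a - b)) ^ (p - 1 - i)) * (a - b) := by
    linear_combination -h2
  rw [this]
  apply mul_le_mul_of_nonneg_right _ hab
  apply Finset.sum_le_sum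
  intro i _
  have hble : b ≤ 1 - (a - b) := by linarith
  rw [one_pow]
  exact mul_le_mul (pow_le_one₀ (by linarith) ha)
    (pow_le_pow_left₀ hb hble _) (pow_nonneg hb _) (by norm_num)

/-- the modulus of continuity of `f_p` on `[-1,1]` is
`ω(f_p, δ) = 1 - (1-δ)^p`, and `1 - (1-δ)^p ≤ p·δ`. -/
theorem statement14 (p : ℕ) (hp : 1 ≤ p) (δ : ℝ) (hδ : δ ∈ Set.Icc (0 : ℝ) 1) :
    sSup { y : ℝ | ∃ x₁ ∈ Set.Icc (-1 : ℝ) 1, ∃ x₂ ∈ Set.Icc (-1 : ℝ) 1,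
        |x₁ - x₂| ≤ δ ∧ y = |negPart p x₁ - negPart p x₂| } = 1 - (1 - δ) ^ p ∧
      1 - (1 - δ) ^ p ≤ p * δ := by
  obtain ⟨hδ0, hδ1⟩ := hδ
  constructor
  · -- the supremum
    set S := { y : ℝ | ∃ x₁ ∈ Set.Icc (-1 : ℝ) 1, ∃ x₂ ∈ Set.Icc (-1 : ℝ) 1,
        |x₁ - x₂| ≤ δ ∧ y = |negPart p x₁ - negPart p x₂| } with hS
    have hub : ∀ y ∈ S, y ≤ 1 - (1 - δ) ^ p := by
      rintro y ⟨x₁, hx₁, x₂, hx₂, hdist, rfl⟩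
      rw [negPart_eq_max_pow p hp, negPart_eq_max_pow p hp]
      set a := max (-x₁) 0 with hadef
      set b := max (-x₂) 0 with hbdef
      have ha0 : 0 ≤ a := le_max_right _ _
      have hb0 : 0 ≤ b := le_max_right _ _
      have ha1 : a ≤ 1 := max_le (by linarith [hx₁.1]) one_pos.le
      have hb1 : b ≤ 1 := max_le (by linarith [hx₂.1]) one_pos.le
      have habd : |a - b| ≤ δ := by
        refine le_trans (le_trans (abs_max_sub_max_le_abs (-x₁) (-x₂) 0) ?_) hdist
        rw [show -x₁ - -x₂ = -(x₁ - x₂) by ring, abs_neg]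
      have key : ∀ u v : ℝ, 0 ≤ v → v ≤ u → u ≤ 1 → |u - v| ≤ δ →
          u ^ p - v ^ p ≤ 1 - (1 - δ) ^ p := by
        intro u v hv hvu hu hd
        refine le_trans (key_bound p u v hv hvu hu) ?_
        have hd' : u - v ≤ δ := by rw [abs_of_nonneg (by linarith)] at hd; exact hd
        have : (1 - δ) ^ p ≤ (1 - (u - v)) ^ p :=
          pow_le_pow_left₀ (by linarith) (by linarith) _
        linarith
      rcases le_total b a with h | h
      · rw [abs_of_nonneg (by have := pow_le_pow_left₀ hb0 h p; linarith)]
        exact key a b hb0 h ha1 habd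
      · rw [abs_of_nonpos (by have := pow_le_pow_left₀ ha0 h p; linarith)]
        have : |b - a| ≤ δ := by rwa [abs_sub_comm]
        have := key b a ha0 h hb1 this
        linarith
    have hmem : 1 - (1 - δ) ^ p ∈ S := by
      refine ⟨-1, ⟨le_refl _, by norm_num⟩, -(1 - δ), ⟨by simp; linarith, by linarith⟩, ?_, ?_⟩
      · rw [show -1 - -(1 - δ) = -δ by ring, abs_neg, abs_of_nonneg hδ0]
      · rw [negPart_eq_max_pow p hp, negPart_eq_max_pow p hp]
        have h1 : max (-(-1) : ℝ) 0 = 1 := by norm_num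
        have h2 : max (-(-(1 - δ))) 0 = 1 - δ := by rw [neg_neg]; exact max_eq_left (by linarith)
        rw [h1, h2, one_pow]
        have : (1 - δ) ^ p ≤ 1 := pow_le_one₀ (by linarith) (by linarith)
        rw [abs_of_nonneg (by linarith)]
    exact le_antisymm (csSup_le ⟨_, hmem⟩ hub) (le_csSup ⟨_, hub⟩ hmem)
  · -- Bernoulli
    have := one_add_mul_le_pow (a := -δ) (by linarith) p
    rw [show (1 : ℝ) + -δ = 1 - δ by ring] at this
    have h : 1 + (p : ℝ) * (-δ) ≤ (1 - δ) ^ p := this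
    nlinarith
end
end

section
/- If q ∈ ℝ[x] satisfies q(x) > 0 for all x ∈ [0,1], then there exist nonnegative real numbers a_α for α = (α₁,α₂) ∈ ℕ², only finitely many of which are nonzero, such that q(x) = Σ_α a_α·x^{α₁}·(1−x)^{α₂} as polynomials. -/
open Polynomial Finset

-- telescoping bound for products in [0,1]
lemma st17_prod_diff (s : Finset ℕ) (f g : ℕ → ℝ)
    (hf : ∀ i ∈ s, f i ∈ Set.Icc (0:ℝ) 1) (hg : ∀ i ∈ s, g i ∈ Set.Icc (0:ℝ) 1) :
    |(∏ i ∈ s, f i) - ∏ i ∈ s, g i| ≤ ∑ i ∈ s, |f i - g i| := by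
  induction s using Finset.induction_on with
  | empty => simp
  | insert _ _ ha ih =>
    rename_i a s
    simp only [Finset.prod_insert ha, Finset.sum_insert ha]
    have hfa := hf a (mem_insert_self a s)
    have hga := hg a (mem_insert_self a s)
    have hf' : ∀ i ∈ s, f i ∈ Set.Icc (0:ℝ) 1 := fun i hi => hf i (mem_insert_of_mem hi)
    have hg' : ∀ i ∈ s, g i ∈ Set.Icc (0:ℝ) 1 := fun i hi => hg i (mem_insert_of_mem hi)
    have hpf : (∏ i ∈ s, f i) ∈ Set.Icc (0:ℝ) 1 := by
      constructor
      · exact Finset.prod_nonneg fun i hi => (hf' i hi).1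
      · exact Finset.prod_le_one (fun i hi => (hf' i hi).1) (fun i hi => (hf' i hi).2)
    have key : f a * ∏ i ∈ s, f i - g a * ∏ i ∈ s, g i
        = (f a - g a) * ∏ i ∈ s, f i + g a * ((∏ i ∈ s, f i) - ∏ i ∈ s, g i) := by ring
    rw [key]
    calc |(f a - g a) * ∏ i ∈ s, f i + g a * ((∏ i ∈ s, f i) - ∏ i ∈ s, g i)|
        ≤ |(f a - g a) * ∏ i ∈ s, f i| + |g a * ((∏ i ∈ s, f i) - ∏ i ∈ s, g i)| := abs_add_le _ _
      _ ≤ |f a - g a| * 1 + 1 * (∑ i ∈ s, |f i - g i|) := by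
          rw [abs_mul, abs_mul]
          have h1 : |∏ i ∈ s, f i| ≤ 1 := by rw [abs_of_nonneg hpf.1]; exact hpf.2
          have h2 : |g a| ≤ 1 := by rw [abs_of_nonneg hga.1]; exact hga.2
          exact add_le_add (mul_le_mul_of_nonneg_left h1 (abs_nonneg _))
            (mul_le_mul h2 (ih hf' hg') (abs_nonneg _) zero_le_one)
      _ = |f a - g a| + ∑ i ∈ s, |f i - g i| := by ring

-- Bernstein basis identity
lemma st17_bern (n j : ℕ) (hj : j ≤ n) :
    ∑ k ∈ range (n+1), C ((k.choose j : ℝ)) * (C ((n.choose k : ℝ)) * X ^ k * (1 - X) ^ (n - k))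
      = C ((n.choose j : ℝ)) * X ^ j := by
  have hsub : Finset.Ico j (n+1) ⊆ range (n+1) := by
    intro k hk; simp only [Finset.mem_Ico] at hk; exact Finset.mem_range.2 hk.2
  rw [← Finset.sum_subset hsub (by
    intro k _ hk
    simp only [Finset.mem_Ico, not_and, not_lt, Finset.mem_range] at hk ⊢
    rename_i hkr
    have : k < j := by
      by_contra h
      exact absurd (Finset.mem_range.1 hkr) (not_lt.2 (le_of_not_gt (fun _ => (hk (not_lt.1 h)).not_gt (Finset.mem_range.1 hkr))))
    rw [Nat.choose_eq_zero_of_lt this]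
    simp)]
  rw [Finset.sum_Ico_eq_sum_range]
  have hrw : n + 1 - j = (n - j) + 1 := by omega
  rw [hrw]
  have hterm : ∀ m ∈ range ((n-j)+1),
      C (((j+m).choose j : ℝ)) * (C ((n.choose (j+m) : ℝ)) * X ^ (j+m) * (1 - X) ^ (n - (j+m)))
      = C ((n.choose j : ℝ)) * X ^ j *
        (X ^ m * (1 - X) ^ ((n-j) - m) * ((n-j).choose m : ℝ[X])) := by
    intro m hm
    have hm' : m ≤ n - j := Nat.lt_succ_iff.1 (Finset.mem_range.1 hm)
    have hid : n.choose (j+m) * (j+m).choose j = n.choose j * (n - j).choose m := by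
      have := Nat.choose_mul (n := n) (k := j+m) (s := j) (by omega)
      simpa using this
    have hcast : ((j+m).choose j : ℝ) * (n.choose (j+m) : ℝ)
        = (n.choose j : ℝ) * ((n-j).choose m : ℝ) := by
      rw [mul_comm]
      exact_mod_cast congrArg (Nat.cast : ℕ → ℝ) hid
    have hpow : n - (j+m) = (n - j) - m := by omega
    rw [hpow, pow_add]
    rw [← C_eq_natCast]
    ring_nf
    rw [← C_mul, hcast, C_mul]
    ring
  rw [Finset.sum_congr rfl hterm, ← Finset.mul_sum]
  have hbin : ∑ m ∈ range ((n-j)+1), X ^ m * (1 - X) ^ ((n-j) - m) * ((n-j).choose m : ℝ[X])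
      = (X + (1 - X)) ^ (n - j) := (add_pow X (1 - X) (n-j)).symm
  rw [hbin]
  simp

lemma st17_desc (k j : ℕ) (hj : j ≤ k) :
    (k.choose j : ℝ) * (j.factorial : ℝ) = ∏ i ∈ range j, ((k:ℝ) - i) := by
  have h1 : ((k.descFactorial j : ℕ) : ℝ) = ∏ i ∈ range j, ((k:ℝ) - i) := by
    rw [Nat.descFactorial_eq_prod_range, Nat.cast_prod]
    refine Finset.prod_congr rfl fun i hi => ?_
    have hik : i ≤ k := le_trans (Finset.mem_range.1 hi).le hj
    rw [Nat.cast_sub hik]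
  rw [Nat.descFactorial_eq_factorial_mul_choose] at h1
  push_cast at h1
  rw [mul_comm]
  exact h1

lemma st17_ratio (n k j : ℕ) (hj : j ≤ k) (hk : k ≤ n) :
    (k.choose j : ℝ) / (n.choose j : ℝ) = ∏ i ∈ range j, (((k:ℝ) - i) / ((n:ℝ) - i)) := by
  have hjn : j ≤ n := hj.trans hk
  have hfac : (j.factorial : ℝ) ≠ 0 := by exact_mod_cast j.factorial_ne_zero
  have hden : ∀ i ∈ range j, ((n:ℝ) - i) ≠ 0 := by
    intro i hi
    have : (i:ℝ) < n := by
      exact_mod_cast lt_of_lt_of_le (Finset.mem_range.1 hi) hjn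
    linarith
  have hprodn : (∏ i ∈ range j, ((n:ℝ) - i)) ≠ 0 := Finset.prod_ne_zero_iff.2 hden
  have h1 := st17_desc k j hj
  have h2 := st17_desc n j hjn
  rw [Finset.prod_div_distrib, ← h1, ← h2]
  have hch : (n.choose j : ℝ) ≠ 0 := by
    exact_mod_cast (Nat.choose_pos hjn).ne'
  field_simp

lemma st17_est (d n k j : ℕ) (hj : j ≤ d) (hd : d < n) (hk : k ≤ n) :
    |(k.choose j : ℝ) / (n.choose j) - ((k:ℝ)/n)^j| ≤ (d:ℝ)*d / ((n:ℝ)-d) := by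
  have hn0 : (0:ℝ) < n := by exact_mod_cast Nat.pos_of_ne_zero (by omega)
  have hnd : (0:ℝ) < (n:ℝ) - d := by
    have : (d:ℝ) < n := by exact_mod_cast hd
    linarith
  have hkn : (k:ℝ) ≤ n := by exact_mod_cast hk
  have hk0 : (0:ℝ) ≤ k := Nat.cast_nonneg k
  rcases le_or_gt j k with hjk | hjk
  · -- j ≤ k : use the product formula
    rw [st17_ratio n k j hjk hk]
    have hgp : ((k:ℝ)/n)^j = ∏ _i ∈ range j, ((k:ℝ)/n) := by
      rw [Finset.prod_const, Finset.card_range]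
    rw [hgp]
    have hf : ∀ i ∈ range j, (((k:ℝ) - i)/((n:ℝ) - i)) ∈ Set.Icc (0:ℝ) 1 := by
      intro i hi
      have hij : (i:ℝ) ≤ k := by exact_mod_cast le_trans (Finset.mem_range.1 hi).le hjk
      have hin : (i:ℝ) < n := by
        have : i < n := lt_of_lt_of_le (Finset.mem_range.1 hi) (le_trans hjk hk)
        exact_mod_cast this
      constructor
      · exact div_nonneg (by linarith) (by linarith)
      · rw [div_le_one (by linarith)]; linarith
    have hg : ∀ i ∈ range j, ((k:ℝ)/n) ∈ Set.Icc (0:ℝ) 1 := by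
      intro i _
      exact ⟨div_nonneg hk0 hn0.le, by rw [div_le_one hn0]; exact hkn⟩
    refine le_trans (st17_prod_diff (range j) _ _ hf hg) ?_
    have hterm : ∀ i ∈ range j, |((k:ℝ) - i)/((n:ℝ) - i) - (k:ℝ)/n| ≤ (d:ℝ)/((n:ℝ)-d) := by
      intro i hi
      have hid : (i:ℝ) ≤ d := by
        exact_mod_cast le_trans (Finset.mem_range.1 hi).le hj
      have hin : (i:ℝ) < n := by linarith
      have hni : (0:ℝ) < (n:ℝ) - i := by linarith
      have he : ((k:ℝ) - i)/((n:ℝ) - i) - (k:ℝ)/n = (i:ℝ)*((k:ℝ)-n)/(((n:ℝ)-i)*n) := by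
        field_simp
        ring
      rw [he, abs_div, abs_mul]
      rw [abs_of_nonneg (Nat.cast_nonneg i : (0:ℝ) ≤ i),
        abs_of_nonpos (by linarith : (k:ℝ)-n ≤ 0),
        abs_of_pos (by positivity : (0:ℝ) < ((n:ℝ)-i)*n)]
      have step : (i:ℝ) * -((k:ℝ)-n) / (((n:ℝ)-i)*n) ≤ (d:ℝ) * n / (((n:ℝ)-d)*n) := by
        apply div_le_div₀ (by positivity)
        · have h1 : -((k:ℝ)-n) ≤ n := by linarith
          have := mul_le_mul hid h1 (by linarith) (Nat.cast_nonneg d)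
          linarith
        · positivity
        · have : (n:ℝ) - d ≤ (n:ℝ) - i := by linarith
          exact mul_le_mul_of_nonneg_right this hn0.le
      refine step.trans ?_
      rw [mul_div_mul_right _ _ hn0.ne']
    refine le_trans (Finset.sum_le_sum hterm) ?_
    rw [Finset.sum_const, Finset.card_range, nsmul_eq_mul]
    have hjd : (j:ℝ) ≤ d := by exact_mod_cast hj
    rw [mul_div_assoc]
    exact mul_le_mul_of_nonneg_right hjd (by positivity)
  · -- k < j : choose vanishes
    have hj1 : 1 ≤ j := by omega
    have hd1 : (1:ℝ) ≤ d := by exact_mod_cast (hj1.trans hj)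
    rw [Nat.choose_eq_zero_of_lt hjk]
    simp only [Nat.cast_zero, zero_div, zero_sub, abs_neg]
    rw [abs_of_nonneg (by positivity)]
    have h1 : ((k:ℝ)/n)^j ≤ (k:ℝ)/n := by
      apply pow_le_of_le_one (div_nonneg hk0 hn0.le)
      · rw [div_le_one hn0]; exact hkn
      · omega
    refine h1.trans ?_
    apply div_le_div₀ (by positivity)
    · have hkd : (k:ℝ) ≤ d := by exact_mod_cast (by omega : k ≤ d)
      nlinarith
    · exact hnd
    · linarith [Nat.cast_nonneg (α := ℝ) d]

lemma st17_repr (q : ℝ[X]) (n : ℕ) (hn : q.natDegree ≤ n) :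
    q = ∑ k ∈ range (n+1),
      C ((∑ j ∈ range (q.natDegree+1), q.coeff j * ((k.choose j : ℝ)/(n.choose j)))
        * (n.choose k : ℝ)) * X ^ k * (1 - X) ^ (n - k) := by
  have step1 : ∀ k ∈ range (n+1),
      C ((∑ j ∈ range (q.natDegree+1), q.coeff j * ((k.choose j : ℝ)/(n.choose j)))
        * (n.choose k : ℝ)) * X ^ k * (1 - X) ^ (n - k)
      = ∑ j ∈ range (q.natDegree+1), C (q.coeff j / (n.choose j : ℝ)) *
          (C ((k.choose j : ℝ)) * (C ((n.choose k : ℝ)) * X ^ k * (1 - X) ^ (n - k))) := by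
    intro k _
    rw [Finset.sum_mul, map_sum, Finset.sum_mul, Finset.sum_mul]
    refine Finset.sum_congr rfl fun j _ => ?_
    rw [show q.coeff j * ((k.choose j : ℝ)/(n.choose j)) * (n.choose k : ℝ)
        = (q.coeff j / (n.choose j : ℝ)) * (k.choose j : ℝ) * (n.choose k : ℝ) by ring,
      C_mul, C_mul]
    ring
  rw [Finset.sum_congr rfl step1, Finset.sum_comm]
  have step2 : ∀ j ∈ range (q.natDegree+1),
      (∑ k ∈ range (n+1), C (q.coeff j / (n.choose j : ℝ)) *
        (C ((k.choose j : ℝ)) * (C ((n.choose k : ℝ)) * X ^ k * (1 - X) ^ (n - k))))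
      = C (q.coeff j) * X ^ j := by
    intro j hj
    have hjn : j ≤ n := le_trans (Nat.lt_succ_iff.1 (Finset.mem_range.1 hj)) hn
    rw [← Finset.mul_sum, st17_bern n j hjn, ← mul_assoc, ← C_mul,
      div_mul_cancel₀ _ (by exact_mod_cast (Nat.choose_pos hjn).ne' : (n.choose j : ℝ) ≠ 0)]
  rw [Finset.sum_congr rfl step2]
  exact q.as_sum_range_C_mul_X_pow

/-- Handelman's theorem on `[0,1]`: a real polynomial strictly positive
on `[0,1]` is a finite nonnegative combination of the monomials `x^{α₁} (1-x)^{α₂}`. -/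
theorem statement17 (q : Polynomial ℝ) (hq : ∀ x ∈ Set.Icc (0 : ℝ) 1, 0 < q.eval x) :
    ∃ a : (ℕ × ℕ) →₀ ℝ, (∀ α, 0 ≤ a α) ∧
      q = a.sum fun α r => C r * X ^ α.1 * (1 - X) ^ α.2 := by
  set d := q.natDegree with hdd
  set M : ℝ := ∑ j ∈ range (d+1), |q.coeff j| with hM
  have hM0 : 0 ≤ M := Finset.sum_nonneg fun j _ => abs_nonneg _
  -- positive minimum on [0,1]
  obtain ⟨x₀, hx₀, hmin'⟩ := IsCompact.exists_isMinOn (isCompact_Icc (a := (0:ℝ)) (b := 1))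
    ⟨0, Set.left_mem_Icc.2 zero_le_one⟩ (q.continuous_aeval.continuousOn)
  have hmin : ∀ y ∈ Set.Icc (0:ℝ) 1, q.eval x₀ ≤ q.eval y := fun y hy => hmin' hy
  set δ : ℝ := q.eval x₀ with hδdef
  have hδ : 0 < δ := hq x₀ hx₀
  -- choose n
  obtain ⟨m, hm⟩ := exists_nat_ge (M * d * d / δ + 1)
  set n := d + m with hn
  have hm1 : 1 ≤ m := by
    have h0 : (0:ℝ) ≤ M * d * d / δ := by positivity
    have : (1:ℝ) ≤ m := by linarith
    exact_mod_cast this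
  have hd : d < n := by omega
  have hndm : (n:ℝ) - d = (m:ℝ) := by
    rw [hn]; push_cast; ring
  have hE : M * ((d:ℝ)*d/((n:ℝ)-d)) ≤ δ := by
    rw [hndm]
    have hmpos : (0:ℝ) < m := by exact_mod_cast hm1
    rw [mul_div_assoc'] at *
    rw [div_le_iff₀ hmpos]
    have h1 : M * d * d / δ ≤ (m:ℝ) := by linarith
    calc M * ((d:ℝ) * d) = (M * d * d / δ) * δ := by field_simp
      _ ≤ (m:ℝ) * δ := mul_le_mul_of_nonneg_right h1 hδ.le
      _ = δ * m := mul_comm _ _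
  set b : ℕ → ℝ := fun k => ∑ j ∈ range (d+1), q.coeff j * ((k.choose j : ℝ)/(n.choose j))
    with hb
  have hn0 : (0:ℝ) < n := by exact_mod_cast (by omega : 0 < n)
  -- each Bernstein coefficient is nonnegative
  have hbpos : ∀ k, k ≤ n → 0 ≤ b k := by
    intro k hk
    have hmem : (k:ℝ)/n ∈ Set.Icc (0:ℝ) 1 := by
      constructor
      · positivity
      · rw [div_le_one hn0]; exact_mod_cast hk
    have hev : q.eval ((k:ℝ)/n) = ∑ j ∈ range (d+1), q.coeff j * ((k:ℝ)/n)^j :=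
      eval_eq_sum_range _
    have hdiff : |b k - q.eval ((k:ℝ)/n)| ≤ M * ((d:ℝ)*d/((n:ℝ)-d)) := by
      rw [hev, hb, ← Finset.sum_sub_distrib]
      refine (Finset.abs_sum_le_sum_abs _ _).trans ?_
      rw [hM, Finset.sum_mul]
      refine Finset.sum_le_sum fun j hj => ?_
      rw [show q.coeff j * ((k.choose j : ℝ)/(n.choose j)) - q.coeff j * ((k:ℝ)/n)^j
          = q.coeff j * ((k.choose j : ℝ)/(n.choose j) - ((k:ℝ)/n)^j) by ring, abs_mul]
      exact mul_le_mul_of_nonneg_left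
        (st17_est d n k j (Nat.lt_succ_iff.1 (Finset.mem_range.1 hj)) hd hk) (abs_nonneg _)
    have hevδ : δ ≤ q.eval ((k:ℝ)/n) := hmin _ hmem
    have := abs_le.1 hdiff
    linarith [this.1]
  -- build the Finsupp
  refine ⟨Finsupp.onFinset ((range (n+1)).image (fun k => (k, n - k)))
    (fun α => if α.1 + α.2 = n then b α.1 * (n.choose α.1 : ℝ) else 0) ?_, ?_, ?_⟩
  · intro α hα
    by_cases hc : α.1 + α.2 = n
    · refine Finset.mem_image.2 ⟨α.1, Finset.mem_range.2 (by omega), ?_⟩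
      ext
      · rfl
      · simp only; omega
    · simp [hc] at hα
  · intro α
    simp only [Finsupp.onFinset_apply]
    split_ifs with hc
    · exact mul_nonneg (hbpos α.1 (by omega)) (Nat.cast_nonneg _)
    · exact le_refl 0
  · rw [Finsupp.onFinset_sum _ (fun α => by simp)]
    rw [Finset.sum_image (fun k₁ _ k₂ _ h => congrArg Prod.fst h)]
    have hterm : ∀ k ∈ range (n+1),
        (fun α r => C r * X ^ α.1 * (1 - X) ^ α.2) (k, n - k)
          (if k + (n - k) = n then b k * (n.choose k : ℝ) else 0)
        = C (b k * (n.choose k : ℝ)) * X ^ k * (1 - X) ^ (n - k) := by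
      intro k hk
      have hkn : k ≤ n := Nat.lt_succ_iff.1 (Finset.mem_range.1 hk)
      simp only [if_pos (by omega : k + (n - k) = n)]
    rw [Finset.sum_congr rfl hterm]
    exact st17_repr q n (le_of_lt hd)
end
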